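/- arXiv:2511.09046 — 4 statements merged into one kernel-verified Lean document; each statement's English description precedes it below -/
import Mathlib

section
/- Let a, b > 0 and let 0 < δ < min{a, π}. Then there exists ε > 0 such that for every closed ball B̄ of radius δ with B̄ ⊆ ℝ × [a, b], the image under the polar coordinate map α of the boundary circle ∂B̄ satisfies reach(α(∂B̄)) ≥ ε. -/
open Set Metric Filter
open scoped ENNReal NNReal

noncomputable section

/-- The closed ε-neighbourhood of a set: the closure of the union of open ε-balls
centred at points of `E`. -/
def epsNbhd {X : Type*} [MetricSpace X] (E : Set X) (ε : ℝ) : Set X :=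
  closure (⋃ x ∈ E, Metric.ball x ε)

/-- `Unp E` is the set of points having a unique nearest point in (the closure of) `E`. -/
def unp {X : Type*} [MetricSpace X] (E : Set X) : Set X :=
  {z | ∃! y, y ∈ closure E ∧ dist z y = Metric.infDist z E}

/-- The local reach of `E` at `y`: the supremum of radii `r` such that the open ball
`B(y, r)` is contained in `Unp E`. -/
def reachAt {X : Type*} [MetricSpace X] (E : Set X) (y : X) : ℝ≥0∞ :=
  ⨆ (r : ℝ≥0∞) (_ : EMetric.ball y r ⊆ unp E), r

/-- The reach of a set `E` (defined via the closure of `E`). -/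
def reach {X : Type*} [MetricSpace X] (E : Set X) : ℝ≥0∞ :=
  ⨅ y ∈ closure E, reachAt E y

/-- The point of the Euclidean plane with coordinates `(a, b)`. -/
def pt (a b : ℝ) : EuclideanSpace ℝ (Fin 2) := (WithLp.equiv 2 (Fin 2 → ℝ)).symm ![a, b]

/-- The polar coordinate map `(x, r) ↦ (r cos x, r sin x)`, viewed as a self-map of the
Euclidean plane (first coordinate = angle, second coordinate = radius). -/
def polarMap (v : EuclideanSpace ℝ (Fin 2)) : EuclideanSpace ℝ (Fin 2) :=
  pt (v 1 * Real.cos (v 0)) (v 1 * Real.sin (v 0))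

/-- A set `Γ ⊆ ℝ²` is a C¹ curve if it is the image of an injective continuously
differentiable map `γ : [0,1] → ℝ²` with nonvanishing derivative. -/
def IsC1Curve (Γ : Set (EuclideanSpace ℝ (Fin 2))) : Prop :=
  ∃ γ : ℝ → EuclideanSpace ℝ (Fin 2),
    Set.InjOn γ (Set.Icc 0 1) ∧
    ContDiffOn ℝ 1 γ (Set.Icc 0 1) ∧
    (∀ t ∈ Set.Icc (0:ℝ) 1, derivWithin γ (Set.Icc 0 1) t ≠ 0) ∧
    Γ = γ '' Set.Icc 0 1

set_option maxHeartbeats 1000000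


lemma aux_mvt (f f' : ℝ → ℝ) (hd : ∀ t, HasDerivAt f (f' t) t) {C x y : ℝ}
    (hC : ∀ t ∈ Set.uIcc x y, |f' t| ≤ C) : |f y - f x| ≤ C * |y - x| := by
  have := Convex.norm_image_sub_le_of_norm_hasDerivWithin_le (𝕜 := ℝ) (f := f) (f' := f')
    (s := Set.uIcc x y) (fun t ht => (hd t).hasDerivWithinAt) (fun t ht => hC t ht)
    (convex_uIcc x y) Set.left_mem_uIcc Set.right_mem_uIcc
  simpa [Real.norm_eq_abs] using this

lemma aux_mem_uIcc_abs {u t : ℝ} (hu : u ∈ Set.uIcc 0 t) : |u| ≤ |t| := by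
  rcases Set.mem_uIcc.1 hu with ⟨h1, h2⟩ | ⟨h1, h2⟩ <;> rw [abs_le] <;>
    constructor <;> cases abs_cases t <;> linarith [neg_abs_le t, le_abs_self t]

lemma aux_abs_sin_le (t : ℝ) : |Real.sin t| ≤ |t| := by
  have := aux_mvt Real.sin Real.cos Real.hasDerivAt_sin (C := 1) (x := 0) (y := t)
    (fun u _ => Real.abs_cos_le_one u)
  simpa using this

lemma aux_abs_cos_sub_one_lin (t : ℝ) : |Real.cos t - 1| ≤ |t| := by
  have := aux_mvt Real.cos (fun u => -Real.sin u) Real.hasDerivAt_cos (C := 1) (x := 0) (y := t)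
    (fun u _ => by simpa using Real.abs_sin_le_one u)
  simpa using this

lemma aux_abs_cos_sub_one (t : ℝ) : |Real.cos t - 1| ≤ t ^ 2 := by
  have := aux_mvt Real.cos (fun u => -Real.sin u) Real.hasDerivAt_cos (C := |t|) (x := 0) (y := t)
    (fun u hu => by simpa using le_trans (aux_abs_sin_le u) (aux_mem_uIcc_abs hu))
  calc |Real.cos t - 1| = |Real.cos t - Real.cos 0| := by norm_num
    _ ≤ |t| * |t - 0| := this
    _ = t ^ 2 := by rw [sub_zero, ← abs_mul, ← sq, abs_sq]

lemma aux_abs_sin_sub_self (t : ℝ) : |Real.sin t - t| ≤ t ^ 2 := by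
  have hd : ∀ u, HasDerivAt (fun u => Real.sin u - u) (Real.cos u - 1) u :=
    fun u => (Real.hasDerivAt_sin u).sub (hasDerivAt_id u)
  have := aux_mvt _ _ hd (C := |t|) (x := 0) (y := t)
    (fun u hu => le_trans (aux_abs_cos_sub_one_lin u) (aux_mem_uIcc_abs hu))
  calc |Real.sin t - t| = |(Real.sin t - t) - (Real.sin 0 - 0)| := by norm_num
    _ ≤ |t| * |t - 0| := this
    _ = t ^ 2 := by rw [sub_zero, ← abs_mul, ← sq, abs_sq]


lemma aux_sin_lb {δ m : ℝ} (hδ : 0 < δ) (hδπ : δ ≤ Real.pi) (hm0 : 0 ≤ m) (hmδ : m ≤ δ) :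
    Real.sin δ / δ * m ≤ Real.sin m := by
  have hcc := strictConcaveOn_sin_Icc.concaveOn
  have h1 : (0:ℝ) ∈ Set.Icc 0 Real.pi := by constructor <;> [rfl; exact Real.pi_pos.le]
  have h2 : δ ∈ Set.Icc 0 Real.pi := ⟨hδ.le, hδπ⟩
  have key := hcc.2 h1 h2 (show (0:ℝ) ≤ 1 - m/δ by
      have : m/δ ≤ 1 := (div_le_one hδ).2 hmδ
      linarith) (show (0:ℝ) ≤ m/δ by positivity) (show (1 - m/δ) + m/δ = 1 by ring)
  have hs : (1 - m/δ) • (0:ℝ) + (m/δ) • δ = m := by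
    simp only [smul_eq_mul, mul_zero, zero_add]
    field_simp
  rw [hs] at key
  have : (1 - m/δ) • Real.sin 0 + (m/δ) • Real.sin δ = Real.sin δ / δ * m := by
    rw [Real.sin_zero]; simp only [smul_eq_mul, mul_zero, zero_add]; field_simp
  linarith [key, this.symm.le, this.le]

lemma aux_one_sub_cos_lb {δ h : ℝ} (hδ : 0 < δ) (hδπ : δ < Real.pi) (hh : |h| ≤ 2*δ) :
    (Real.sin δ / δ)^2 / 2 * h^2 ≤ 1 - Real.cos h := by
  have hkey : Real.sin (h/2) ^ 2 = Real.sin (|h|/2) ^ 2 := by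
    rcases abs_cases h with ⟨he, _⟩ | ⟨he, _⟩
    · rw [he]
    · rw [he, show -h/2 = -(h/2) by ring, Real.sin_neg]; ring
  have hm0 : 0 ≤ |h|/2 := by positivity
  have hmδ : |h|/2 ≤ δ := by linarith
  have hlb := aux_sin_lb hδ hδπ.le hm0 hmδ
  have hc : 1 - Real.cos h = 2 * Real.sin (h/2)^2 := by
    have := Real.sin_sq_eq_half_sub (h/2)
    rw [show 2*(h/2) = h by ring] at this
    linarith
  have hnn : 0 ≤ Real.sin δ / δ * (|h|/2) := by
    have := Real.sin_pos_of_pos_of_lt_pi hδ hδπ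
    positivity
  have hsq : (Real.sin δ / δ * (|h|/2))^2 ≤ Real.sin (|h|/2)^2 := by
    apply sq_le_sq' _ hlb
    nlinarith [Real.sin_nonneg_of_nonneg_of_le_pi hm0 (by linarith : |h|/2 ≤ Real.pi)]
  rw [hc, hkey]
  have habs : (|h|/2)^2 = h^2/4 := by rw [div_pow, sq_abs]; norm_num
  nlinarith [hsq]


lemma aux_orth (x0 r0 δ z0 z1 θ : ℝ) (hδ : δ ≠ 0)
    (hmin : ∀ t : ℝ,
      (z0 - (r0 + δ*Real.sin θ) * Real.cos (x0 + δ*Real.cos θ))^2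
        + (z1 - (r0 + δ*Real.sin θ) * Real.sin (x0 + δ*Real.cos θ))^2
      ≤ (z0 - (r0 + δ*Real.sin t) * Real.cos (x0 + δ*Real.cos t))^2
        + (z1 - (r0 + δ*Real.sin t) * Real.sin (x0 + δ*Real.cos t))^2) :
    (z0 - (r0 + δ*Real.sin θ) * Real.cos (x0 + δ*Real.cos θ)) *
      (Real.cos θ * Real.cos (x0 + δ*Real.cos θ)
        + (r0 + δ*Real.sin θ) * Real.sin θ * Real.sin (x0 + δ*Real.cos θ))
    + (z1 - (r0 + δ*Real.sin θ) * Real.sin (x0 + δ*Real.cos θ)) *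
      (Real.cos θ * Real.sin (x0 + δ*Real.cos θ)
        - (r0 + δ*Real.sin θ) * Real.sin θ * Real.cos (x0 + δ*Real.cos θ)) = 0 := by
  set X := fun t : ℝ => x0 + δ * Real.cos t with hX
  set R := fun t : ℝ => r0 + δ * Real.sin t with hR
  have hXd : ∀ t, HasDerivAt X (δ * -Real.sin t) t := fun t =>
    ((Real.hasDerivAt_cos t).const_mul δ).const_add x0
  have hRd : ∀ t, HasDerivAt R (δ * Real.cos t) t := fun t =>
    ((Real.hasDerivAt_sin t).const_mul δ).const_add r0
  have hA : HasDerivAt (fun t => R t * Real.cos (X t))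
      (δ * Real.cos θ * Real.cos (X θ) + R θ * (-Real.sin (X θ) * (δ * -Real.sin θ))) θ := by
    have := (hRd θ).mul ((hXd θ).cos)
    convert this using 1
    all_goals rfl
  have hB : HasDerivAt (fun t => R t * Real.sin (X t))
      (δ * Real.cos θ * Real.sin (X θ) + R θ * (Real.cos (X θ) * (δ * -Real.sin θ))) θ := by
    have := (hRd θ).mul ((hXd θ).sin)
    convert this using 1
    all_goals rfl
  have hφ : HasDerivAt (fun t => (z0 - R t * Real.cos (X t))^2 + (z1 - R t * Real.sin (X t))^2)
      ((2:ℕ) * (z0 - R θ * Real.cos (X θ))^1 * (0 - (δ * Real.cos θ * Real.cos (X θ) + R θ * (-Real.sin (X θ) * (δ * -Real.sin θ))))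
        + (2:ℕ) * (z1 - R θ * Real.sin (X θ))^1 * (0 - (δ * Real.cos θ * Real.sin (X θ) + R θ * (Real.cos (X θ) * (δ * -Real.sin θ))))) θ :=
    (((hasDerivAt_const θ z0).sub hA).pow 2).add (((hasDerivAt_const θ z1).sub hB).pow 2)
  have hloc : IsLocalMin (fun t => (z0 - R t * Real.cos (X t))^2 + (z1 - R t * Real.sin (X t))^2) θ :=
    Filter.Eventually.of_forall (fun t => hmin t)
  have h0 := hloc.hasDerivAt_eq_zero hφ
  have h2 : δ * ((z0 - R θ * Real.cos (X θ)) *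
      (Real.cos θ * Real.cos (X θ) + R θ * Real.sin θ * Real.sin (X θ))
    + (z1 - R θ * Real.sin (X θ)) *
      (Real.cos θ * Real.sin (X θ) - R θ * Real.sin θ * Real.cos (X θ))) = 0 := by
    push_cast at h0
    linear_combination (-1/2 : ℝ) * h0
  have := mul_eq_zero.mp h2
  rcases this with h | h
  · exact absurd h hδ
  · exact h

lemma aux_pt0 (A B : ℝ) : pt A B 0 = A := rfl
lemma aux_pt1 (A B : ℝ) : pt A B 1 = B := rfl
lemma aux_polar0 (v : EuclideanSpace ℝ (Fin 2)) : polarMap v 0 = v 1 * Real.cos (v 0) := rfl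
lemma aux_polar1 (v : EuclideanSpace ℝ (Fin 2)) : polarMap v 1 = v 1 * Real.sin (v 0) := rfl

lemma aux_dist_sq (z w : EuclideanSpace ℝ (Fin 2)) :
    dist z w ^ 2 = (z 0 - w 0)^2 + (z 1 - w 1)^2 := by
  rw [EuclideanSpace.dist_eq, Real.sq_sqrt (by positivity)]
  simp [Fin.sum_univ_two, Real.dist_eq, sq_abs]

lemma aux_dist_of_sq {z w : EuclideanSpace ℝ (Fin 2)} {d : ℝ} (hd : 0 ≤ d)
    (h : (z 0 - w 0)^2 + (z 1 - w 1)^2 = d^2) : dist z w = d := by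
  have h2 : dist z w ^ 2 = d ^ 2 := by rw [aux_dist_sq]; exact h
  calc dist z w = Real.sqrt (dist z w ^ 2) := (Real.sqrt_sq dist_nonneg).symm
    _ = Real.sqrt (d ^ 2) := by rw [h2]
    _ = d := Real.sqrt_sq hd

lemma aux_cont : Continuous polarMap := by
  have h0 : Continuous fun v : EuclideanSpace ℝ (Fin 2) => v 0 :=
    (continuous_apply (0 : Fin 2)).comp (PiLp.continuous_ofLp 2 fun _ : Fin 2 => ℝ)
  have h1 : Continuous fun v : EuclideanSpace ℝ (Fin 2) => v 1 :=
    (continuous_apply (1 : Fin 2)).comp (PiLp.continuous_ofLp 2 fun _ : Fin 2 => ℝ)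
  have hf : Continuous fun v : EuclideanSpace ℝ (Fin 2) =>
      ![v 1 * Real.cos (v 0), v 1 * Real.sin (v 0)] := by
    apply continuous_pi
    intro i
    fin_cases i
    · show Continuous fun v : EuclideanSpace ℝ (Fin 2) => v 1 * Real.cos (v 0)
      exact h1.mul (Real.continuous_cos.comp h0)
    · show Continuous fun v : EuclideanSpace ℝ (Fin 2) => v 1 * Real.sin (v 0)
      exact h1.mul (Real.continuous_sin.comp h0)
  exact (PiLp.continuous_toLp 2 fun _ : Fin 2 => ℝ).comp hf


lemma aux_chord {a b δ x y r s : ℝ} (ha : 0 < a) (hδ : 0 < δ) (hδπ : δ < Real.pi)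
    (hra : a ≤ r) (hsa : a ≤ s) (hh : |y - x| ≤ 2*δ) :
    min 1 (a^2*(Real.sin δ/δ)^2) * ((y-x)^2 + (s-r)^2)
      ≤ (s*Real.cos y - r*Real.cos x)^2 + (s*Real.sin y - r*Real.sin x)^2 := by
  have hcos := Real.cos_sub y x
  have hQ : (s*Real.cos y - r*Real.cos x)^2 + (s*Real.sin y - r*Real.sin x)^2
      = (s - r)^2 + 2*r*s*(1 - Real.cos (y - x)) := by
    have py := Real.sin_sq_add_cos_sq y
    have px := Real.sin_sq_add_cos_sq x
    linear_combination s^2*py + r^2*px + 2*r*s*hcos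
  have hlb : (Real.sin δ / δ)^2 / 2 * (y-x)^2 ≤ 1 - Real.cos (y - x) :=
    aux_one_sub_cos_lb hδ hδπ hh
  have hmin1 : min 1 (a^2*(Real.sin δ/δ)^2) ≤ 1 := min_le_left _ _
  have hmin2 : min 1 (a^2*(Real.sin δ/δ)^2) ≤ a^2*(Real.sin δ/δ)^2 := min_le_right _ _
  have hrs : a^2 ≤ r * s := by nlinarith
  have hcos1 : 1 - Real.cos (y - x) ≥ 0 := by nlinarith [Real.cos_le_one (y-x)]
  rw [hQ]
  nlinarith [sq_nonneg (y - x), sq_nonneg (s - r), mul_le_mul_of_nonneg_left hlb (by nlinarith : (0:ℝ) ≤ 2*(r*s)), sq_nonneg (Real.sin δ/δ)]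


lemma aux_abs_le {u d : ℝ} (hd : 0 ≤ d) (h : u^2 ≤ d^2) : |u| ≤ d := by
  have h1 : |u| = Real.sqrt (u^2) := by rw [Real.sqrt_sq_eq_abs]
  rw [h1, show d = Real.sqrt (d^2) from (Real.sqrt_sq hd).symm]
  exact Real.sqrt_le_sqrt h

lemma aux_cos_taylor (x t : ℝ) : |Real.cos (x+t) - Real.cos x + t*Real.sin x| ≤ 2*t^2 := by
  rw [Real.cos_add]
  rw [show Real.cos x*Real.cos t - Real.sin x*Real.sin t - Real.cos x + t*Real.sin x
      = Real.cos x*(Real.cos t - 1) + (-Real.sin x)*(Real.sin t - t) from by ring]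
  calc |Real.cos x*(Real.cos t - 1) + (-Real.sin x)*(Real.sin t - t)|
      ≤ |Real.cos x*(Real.cos t - 1)| + |(-Real.sin x)*(Real.sin t - t)| := abs_add_le _ _
    _ ≤ 1*t^2 + 1*t^2 := by
        rw [abs_mul, abs_mul, abs_neg]
        exact add_le_add
          (mul_le_mul (Real.abs_cos_le_one x) (aux_abs_cos_sub_one t) (abs_nonneg _) one_pos.le)
          (mul_le_mul (Real.abs_sin_le_one x) (aux_abs_sin_sub_self t) (abs_nonneg _) one_pos.le)
    _ = 2*t^2 := by ring

lemma aux_sin_taylor (x t : ℝ) : |Real.sin (x+t) - Real.sin x - t*Real.cos x| ≤ 2*t^2 := by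
  rw [Real.sin_add]
  rw [show Real.sin x*Real.cos t + Real.cos x*Real.sin t - Real.sin x - t*Real.cos x
      = Real.sin x*(Real.cos t - 1) + Real.cos x*(Real.sin t - t) from by ring]
  calc |Real.sin x*(Real.cos t - 1) + Real.cos x*(Real.sin t - t)|
      ≤ |Real.sin x*(Real.cos t - 1)| + |Real.cos x*(Real.sin t - t)| := abs_add_le _ _
    _ ≤ 1*t^2 + 1*t^2 := by
        rw [abs_mul, abs_mul]
        exact add_le_add
          (mul_le_mul (Real.abs_sin_le_one x) (aux_abs_cos_sub_one t) (abs_nonneg _) one_pos.le)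
          (mul_le_mul (Real.abs_cos_le_one x) (aux_abs_sin_sub_self t) (abs_nonneg _) one_pos.le)
    _ = 2*t^2 := by ring


lemma aux_nu {p q u v r b : ℝ} (hp : |p| ≤ 1) (hq : |q| ≤ 1) (hu : |u| ≤ 1) (hv : |v| ≤ 1)
    (hr : 0 ≤ r) (hrb : r ≤ b) : |p*q + r*(u*v)| ≤ 1 + b := by
  have h1 : |p*q| ≤ 1 := by
    rw [abs_mul]; exact mul_le_one₀ hp (abs_nonneg q) hq
  have h2 : |r*(u*v)| ≤ b := by
    rw [abs_mul, abs_mul, abs_of_nonneg hr]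
    calc r * (abs u * abs v) ≤ r * 1 := by
          apply mul_le_mul_of_nonneg_left _ hr
          exact mul_le_one₀ hu (abs_nonneg v) hv
      _ ≤ b := by linarith
  calc |p*q + r*(u*v)| ≤ |p*q| + |r*(u*v)| := abs_add_le _ _
    _ ≤ 1 + b := add_le_add h1 h2

lemma aux_prod_le (u v : ℝ) : abs u * abs v ≤ (u^2+v^2)/2 := by
  nlinarith [sq_nonneg (abs u - abs v), sq_abs u, sq_abs v]

lemma aux_rho_comb {b h2 k2 : ℝ} (hb : 0 ≤ b) (hh : 0 ≤ h2) (hk : 0 ≤ k2) :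
    b*(2*h2) + (h2+k2)/2 ≤ (2*b+1)*(h2+k2) := by nlinarith

/-- The uniform radius. -/
def epsFor (a b δ : ℝ) : ℝ :=
  min 1 (a^2*(Real.sin δ/δ)^2) / (2 * ((1+b)/δ + 2*(2*b+1)))

lemma epsFor_pos {a b δ : ℝ} (ha : 0 < a) (hb : 0 < b) (hδ : 0 < δ) (hδπ : δ < Real.pi) :
    0 < epsFor a b δ := by
  have hs := Real.sin_pos_of_pos_of_lt_pi hδ hδπ
  have h1 : 0 < min 1 (a^2*(Real.sin δ/δ)^2) := lt_min one_pos (by positivity)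
  have h2 : 0 < (1+b)/δ + 2*(2*b+1) := by positivity
  exact div_pos h1 (by positivity)

lemma aux_core {a b δ : ℝ} (ha : 0 < a) (hb : 0 < b) (hδ : 0 < δ) (hδπ : δ < Real.pi)
    (x0 r0 z0 z1 x y r s W : ℝ)
    (hra : a ≤ r) (hrb : r ≤ b) (hsa : a ≤ s) (hsb : s ≤ b)
    (husq : (x - x0)^2 + (r - r0)^2 = δ^2)
    (hvsq : (y - x0)^2 + (s - r0)^2 = δ^2)
    (hmin : ∀ t : ℝ, (z0 - r*Real.cos x)^2 + (z1 - r*Real.sin x)^2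
        ≤ (z0 - (r0 + δ*Real.sin t) * Real.cos (x0 + δ*Real.cos t))^2
          + (z1 - (r0 + δ*Real.sin t) * Real.sin (x0 + δ*Real.cos t))^2)
    (hdq : (z0 - s*Real.cos y)^2 + (z1 - s*Real.sin y)^2
        = (z0 - r*Real.cos x)^2 + (z1 - r*Real.sin x)^2)
    (hWnn : 0 ≤ W) (hW2 : (z0 - r*Real.cos x)^2 + (z1 - r*Real.sin x)^2 = W^2)
    (hWε : W < epsFor a b δ) :
    (s*Real.cos y - r*Real.cos x)^2 + (s*Real.sin y - r*Real.sin x)^2 = 0 := by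
  -- parametrize (x, r)
  obtain ⟨θ, hθ1, hθ2⟩ : ∃ θ, x = x0 + δ * Real.cos θ ∧ r = r0 + δ * Real.sin θ := by
    set w : ℂ := ⟨x - x0, r - r0⟩ with hw
    have habs : ‖w‖ = δ := by
      rw [Complex.norm_def]
      have hn : Complex.normSq w = δ^2 := by
        rw [Complex.normSq_mk]; nlinarith [husq]
      rw [hn, Real.sqrt_sq hδ.le]
    have hw0 : w ≠ 0 := by
      intro h0; rw [h0, norm_zero] at habs; exact absurd habs.symm (ne_of_gt hδ)
    refine ⟨Complex.arg w, ?_, ?_⟩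
    · have h1 := Complex.cos_arg hw0
      rw [habs] at h1
      have h2 : w.re = x - x0 := rfl
      rw [h2] at h1
      field_simp at h1
      linarith
    · have h1 := Complex.sin_arg w
      rw [habs] at h1
      have h2 : w.im = r - r0 := rfl
      rw [h2] at h1
      field_simp at h1
      linarith
  have pyth := Real.sin_sq_add_cos_sq θ
  -- orthogonality
  have hmin' : ∀ t : ℝ,
      (z0 - (r0 + δ*Real.sin θ) * Real.cos (x0 + δ*Real.cos θ))^2
        + (z1 - (r0 + δ*Real.sin θ) * Real.sin (x0 + δ*Real.cos θ))^2
      ≤ (z0 - (r0 + δ*Real.sin t) * Real.cos (x0 + δ*Real.cos t))^2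
        + (z1 - (r0 + δ*Real.sin t) * Real.sin (x0 + δ*Real.cos t))^2 := by
    intro t
    rw [← hθ1, ← hθ2]
    exact hmin t
  have horth := aux_orth x0 r0 δ z0 z1 θ (ne_of_gt hδ) hmin'
  rw [← hθ1, ← hθ2] at horth
  -- |y - x| ≤ 2δ
  have habsx : |x - x0| ≤ δ :=
    aux_abs_le hδ.le (by nlinarith [sq_nonneg (r - r0), husq])
  have habsy : |y - x0| ≤ δ :=
    aux_abs_le hδ.le (by nlinarith [sq_nonneg (s - r0), hvsq])
  have hh2δ : |y - x| ≤ 2*δ := by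
    calc |y - x| ≤ |y - x0| + |x0 - x| := abs_sub_le y x0 x
      _ ≤ δ + δ := by rw [abs_sub_comm x0 x]; exact add_le_add habsy habsx
      _ = 2*δ := by ring
  have hchord := aux_chord (b := b) ha hδ hδπ hra hsa hh2δ
  -- β identity
  have hvsq' : ((y - x) + δ*Real.cos θ)^2 + ((s - r) + δ*Real.sin θ)^2 = δ^2 := by
    rw [show (y - x) + δ*Real.cos θ = y - x0 by rw [hθ1]; ring,
        show (s - r) + δ*Real.sin θ = s - r0 by rw [hθ2]; ring]
    exact hvsq
  have hβ : δ*((y-x)*Real.cos θ + (s-r)*Real.sin θ) = -(((y-x)^2+(s-r)^2))/2 := by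
    linear_combination (1/2)*hvsq' + (-(δ^2)/2)*pyth
  -- decomposition of the linearized inner product
  have hLw : ((s-r)*Real.cos x - r*(y-x)*Real.sin x)*(z0 - r*Real.cos x)
      + ((s-r)*Real.sin x + r*(y-x)*Real.cos x)*(z1 - r*Real.sin x)
      = ((y-x)*Real.cos θ + (s-r)*Real.sin θ) *
        ((z0 - r*Real.cos x)*(Real.sin θ*Real.cos x - r*Real.cos θ*Real.sin x)
          + (z1 - r*Real.sin x)*(Real.sin θ*Real.sin x + r*Real.cos θ*Real.cos x)) := by
    linear_combination (-(y-x)*Real.sin θ + (s-r)*Real.cos θ) * horth +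
      (-(((s-r)*Real.cos x - r*(y-x)*Real.sin x)*(z0 - r*Real.cos x)
        + ((s-r)*Real.sin x + r*(y-x)*Real.cos x)*(z1 - r*Real.sin x))) * pyth
  -- Taylor bounds for the remainder
  have hcosb : |Real.cos y - Real.cos x + (y-x)*Real.sin x| ≤ 2*(y-x)^2 := by
    have := aux_cos_taylor x (y - x)
    rw [show x + (y-x) = y from by ring] at this
    exact this
  have hsinb : |Real.sin y - Real.sin x - (y-x)*Real.cos x| ≤ 2*(y-x)^2 := by
    have := aux_sin_taylor x (y - x)
    rw [show x + (y-x) = y from by ring] at this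
    exact this
  have habs_sθ := Real.abs_sin_le_one θ
  have habs_cθ := Real.abs_cos_le_one θ
  have habs_sx := Real.abs_sin_le_one x
  have habs_cx := Real.abs_cos_le_one x
  set cθ := Real.cos θ with hcθd
  set sθ := Real.sin θ with hsθd
  set cx := Real.cos x with hcxd
  set sx := Real.sin x with hsxd
  set cy := Real.cos y with hcyd
  set sy := Real.sin y with hsyd
  -- remainder bounds
  have hρ0 : |(s*cy - r*cx) - ((s-r)*cx - r*(y-x)*sx)| ≤ (2*b+1)*((y-x)^2+(s-r)^2) := by
    rw [show (s*cy - r*cx) - ((s-r)*cx - r*(y-x)*sx)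
        = s*(cy - cx + (y-x)*sx) - (s-r)*((y-x)*sx) from by ring]
    have h1 : |s*(cy - cx + (y-x)*sx)| ≤ b*(2*(y-x)^2) := by
      rw [abs_mul, abs_of_nonneg (show (0:ℝ) ≤ s by linarith)]
      exact mul_le_mul (by linarith) hcosb (abs_nonneg _) (by linarith)
    have h2 : |(s-r)*((y-x)*sx)| ≤ abs (s-r) * abs (y-x) := by
      rw [abs_mul, abs_mul]
      exact mul_le_mul_of_nonneg_left (mul_le_of_le_one_right (abs_nonneg _) habs_sx) (abs_nonneg _)
    have h3 : abs (s-r) * abs (y-x) ≤ ((y-x)^2+(s-r)^2)/2 := by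
      have := aux_prod_le (s-r) (y-x); linarith
    calc |s*(cy - cx + (y-x)*sx) - (s-r)*((y-x)*sx)|
        ≤ |s*(cy - cx + (y-x)*sx)| + |(s-r)*((y-x)*sx)| := abs_sub _ _
      _ ≤ b*(2*(y-x)^2) + ((y-x)^2+(s-r)^2)/2 := add_le_add h1 (h2.trans h3)
      _ ≤ (2*b+1)*((y-x)^2+(s-r)^2) :=
          aux_rho_comb hb.le (sq_nonneg (y-x)) (sq_nonneg (s-r))
  have hρ1 : |(s*sy - r*sx) - ((s-r)*sx + r*(y-x)*cx)| ≤ (2*b+1)*((y-x)^2+(s-r)^2) := by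
    rw [show (s*sy - r*sx) - ((s-r)*sx + r*(y-x)*cx)
        = s*(sy - sx - (y-x)*cx) + (s-r)*((y-x)*cx) from by ring]
    have h1 : |s*(sy - sx - (y-x)*cx)| ≤ b*(2*(y-x)^2) := by
      rw [abs_mul, abs_of_nonneg (show (0:ℝ) ≤ s by linarith)]
      exact mul_le_mul (by linarith) hsinb (abs_nonneg _) (by linarith)
    have h2 : |(s-r)*((y-x)*cx)| ≤ abs (s-r) * abs (y-x) := by
      rw [abs_mul, abs_mul]
      exact mul_le_mul_of_nonneg_left (mul_le_of_le_one_right (abs_nonneg _) habs_cx) (abs_nonneg _)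
    have h3 : abs (s-r) * abs (y-x) ≤ ((y-x)^2+(s-r)^2)/2 := by
      have := aux_prod_le (s-r) (y-x); linarith
    calc |s*(sy - sx - (y-x)*cx) + (s-r)*((y-x)*cx)|
        ≤ |s*(sy - sx - (y-x)*cx)| + |(s-r)*((y-x)*cx)| := abs_add_le _ _
      _ ≤ b*(2*(y-x)^2) + ((y-x)^2+(s-r)^2)/2 := add_le_add h1 (h2.trans h3)
      _ ≤ (2*b+1)*((y-x)^2+(s-r)^2) :=
          aux_rho_comb hb.le (sq_nonneg (y-x)) (sq_nonneg (s-r))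
  -- |w| bounds
  have hw0 : |z0 - r*cx| ≤ W := aux_abs_le hWnn (by linarith [sq_nonneg (z1 - r*sx), hW2])
  have hw1 : |z1 - r*sx| ≤ W := aux_abs_le hWnn (by linarith [sq_nonneg (z0 - r*cx), hW2])
  -- normal-direction bounds
  have hb1 : |sθ*cx - r*(cθ*sx)| ≤ 1 + b := by
    rw [show sθ*cx - r*(cθ*sx) = sθ*cx + r*((-cθ)*sx) from by ring]
    refine aux_nu habs_sθ habs_cx ?_ habs_sx (by linarith) hrb
    rw [abs_neg]; exact habs_cθ
  have hb2 : |sθ*sx + r*(cθ*cx)| ≤ 1 + b := aux_nu habs_sθ habs_sx habs_cθ habs_cx (by linarith) hrb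
  have hLν : |(z0 - r*cx)*(sθ*cx - r*cθ*sx) + (z1 - r*sx)*(sθ*sx + r*cθ*cx)|
      ≤ (1+b)*W + (1+b)*W := by
    calc |(z0 - r*cx)*(sθ*cx - r*cθ*sx) + (z1 - r*sx)*(sθ*sx + r*cθ*cx)|
        ≤ |(z0 - r*cx)*(sθ*cx - r*cθ*sx)| + |(z1 - r*sx)*(sθ*sx + r*cθ*cx)| := abs_add_le _ _
      _ ≤ W*(1+b) + W*(1+b) := by
          apply add_le_add
          · rw [abs_mul, show sθ*cx - r*cθ*sx = sθ*cx - r*(cθ*sx) from by ring]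
            exact mul_le_mul hw0 hb1 (abs_nonneg _) hWnn
          · rw [abs_mul, show sθ*sx + r*cθ*cx = sθ*sx + r*(cθ*cx) from by ring]
            exact mul_le_mul hw1 hb2 (abs_nonneg _) hWnn
      _ = (1+b)*W + (1+b)*W := by ring
  -- the tangential coefficient
  have hβ' : (y-x)*cθ + (s-r)*sθ = -((y-x)^2+(s-r)^2)/(2*δ) := by
    field_simp
    linear_combination 2*hβ
  have habsβ : |(y-x)*cθ + (s-r)*sθ| = ((y-x)^2+(s-r)^2)/(2*δ) := by
    rw [hβ', show -((y-x)^2+(s-r)^2)/(2*δ) = -(((y-x)^2+(s-r)^2)/(2*δ)) from by ring,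
      abs_neg, abs_of_nonneg (by positivity)]
  -- inner product identities
  have hQhalf : (s*cy - r*cx)*(z0 - r*cx) + (s*sy - r*sx)*(z1 - r*sx)
      = ((s*cy - r*cx)^2 + (s*sy - r*sx)^2)/2 := by linear_combination (-1/2)*hdq
  have hsplit : (s*cy - r*cx)*(z0 - r*cx) + (s*sy - r*sx)*(z1 - r*sx)
      = ((y-x)*cθ + (s-r)*sθ) *
          ((z0 - r*cx)*(sθ*cx - r*cθ*sx) + (z1 - r*sx)*(sθ*sx + r*cθ*cx))
        + (((s*cy - r*cx) - ((s-r)*cx - r*(y-x)*sx))*(z0 - r*cx)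
          + ((s*sy - r*sx) - ((s-r)*sx + r*(y-x)*cx))*(z1 - r*sx)) := by
    linear_combination hLw
  -- the key upper bound
  have hF5 : (s*cy - r*cx)*(z0 - r*cx) + (s*sy - r*sx)*(z1 - r*sx)
      ≤ (((1+b)/δ + 2*(2*b+1)) * ((y-x)^2+(s-r)^2)) * W := by
    rw [hsplit]
    have t1 : ((y-x)*cθ + (s-r)*sθ) *
        ((z0 - r*cx)*(sθ*cx - r*cθ*sx) + (z1 - r*sx)*(sθ*sx + r*cθ*cx))
        ≤ (((y-x)^2+(s-r)^2)/(2*δ)) * ((1+b)*W + (1+b)*W) := by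
      calc ((y-x)*cθ + (s-r)*sθ) *
          ((z0 - r*cx)*(sθ*cx - r*cθ*sx) + (z1 - r*sx)*(sθ*sx + r*cθ*cx))
          ≤ |((y-x)*cθ + (s-r)*sθ) *
            ((z0 - r*cx)*(sθ*cx - r*cθ*sx) + (z1 - r*sx)*(sθ*sx + r*cθ*cx))| := le_abs_self _
        _ = |(y-x)*cθ + (s-r)*sθ| *
            |(z0 - r*cx)*(sθ*cx - r*cθ*sx) + (z1 - r*sx)*(sθ*sx + r*cθ*cx)| := abs_mul _ _
        _ ≤ (((y-x)^2+(s-r)^2)/(2*δ)) * ((1+b)*W + (1+b)*W) := by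
            rw [habsβ]
            exact mul_le_mul_of_nonneg_left hLν (by positivity)
    have t2 : ((s*cy - r*cx) - ((s-r)*cx - r*(y-x)*sx))*(z0 - r*cx)
        ≤ ((2*b+1)*((y-x)^2+(s-r)^2))*W := by
      calc ((s*cy - r*cx) - ((s-r)*cx - r*(y-x)*sx))*(z0 - r*cx)
          ≤ |((s*cy - r*cx) - ((s-r)*cx - r*(y-x)*sx))*(z0 - r*cx)| := le_abs_self _
        _ = |(s*cy - r*cx) - ((s-r)*cx - r*(y-x)*sx)| * |z0 - r*cx| := abs_mul _ _
        _ ≤ ((2*b+1)*((y-x)^2+(s-r)^2))*W :=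
            mul_le_mul hρ0 hw0 (abs_nonneg _) (by positivity)
    have t3 : ((s*sy - r*sx) - ((s-r)*sx + r*(y-x)*cx))*(z1 - r*sx)
        ≤ ((2*b+1)*((y-x)^2+(s-r)^2))*W := by
      calc ((s*sy - r*sx) - ((s-r)*sx + r*(y-x)*cx))*(z1 - r*sx)
          ≤ |((s*sy - r*sx) - ((s-r)*sx + r*(y-x)*cx))*(z1 - r*sx)| := le_abs_self _
        _ = |(s*sy - r*sx) - ((s-r)*sx + r*(y-x)*cx)| * |z1 - r*sx| := abs_mul _ _
        _ ≤ ((2*b+1)*((y-x)^2+(s-r)^2))*W :=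
            mul_le_mul hρ1 hw1 (abs_nonneg _) (by positivity)
    have heq : (((y-x)^2+(s-r)^2)/(2*δ)) * ((1+b)*W + (1+b)*W)
        + (((2*b+1)*((y-x)^2+(s-r)^2))*W + ((2*b+1)*((y-x)^2+(s-r)^2))*W)
        = (((1+b)/δ + 2*(2*b+1)) * ((y-x)^2+(s-r)^2)) * W := by
      field_simp
      ring
    linarith [t1, t2, t3, heq]
  -- endgame
  rcases eq_or_lt_of_le (show (0:ℝ) ≤ (y-x)^2+(s-r)^2 by positivity) with hΔ0 | hΔpos
  · have h1 : (y-x)^2 = 0 := by linarith [sq_nonneg (s-r), sq_nonneg (y-x)]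
    have h2 : (s-r)^2 = 0 := by linarith [sq_nonneg (s-r), sq_nonneg (y-x)]
    have hyx : y = x := sub_eq_zero.mp (sq_eq_zero_iff.mp h1)
    have hsr : s = r := sub_eq_zero.mp (sq_eq_zero_iff.mp h2)
    have e1 : cy = cx := by rw [hcyd, hcxd, hyx]
    have e2 : sy = sx := by rw [hsyd, hsxd, hyx]
    rw [e1, e2, hsr]
    ring
  · exfalso
    have hc1 : 0 < min 1 (a^2*(Real.sin δ/δ)^2) :=
      lt_min one_pos (by
        have := Real.sin_pos_of_pos_of_lt_pi hδ hδπ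
        positivity)
    have hK : 0 < (1+b)/δ + 2*(2*b+1) := by positivity
    have e2 : (((1+b)/δ + 2*(2*b+1)) * ((y-x)^2+(s-r)^2)) * W
        < (((1+b)/δ + 2*(2*b+1)) * ((y-x)^2+(s-r)^2)) * epsFor a b δ :=
      mul_lt_mul_of_pos_left hWε (mul_pos hK hΔpos)
    have e3 : (((1+b)/δ + 2*(2*b+1)) * ((y-x)^2+(s-r)^2)) * epsFor a b δ
        = min 1 (a^2*(Real.sin δ/δ)^2) * ((y-x)^2+(s-r)^2) / 2 := by
      rw [epsFor]
      field_simp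
    linarith [hchord, hQhalf, hF5, e2, e3]

lemma aux_uniq {a b δ : ℝ} (ha : 0 < a) (hb : 0 < b) (hδ : 0 < δ) (hδπ : δ < Real.pi)
    (c z p q : EuclideanSpace ℝ (Fin 2))
    (Hc : ∀ v : EuclideanSpace ℝ (Fin 2), dist v c ≤ δ → a ≤ v 1 ∧ v 1 ≤ b)
    (hp : p ∈ polarMap '' Metric.sphere c δ) (hq : q ∈ polarMap '' Metric.sphere c δ)
    (hmin : ∀ w ∈ polarMap '' Metric.sphere c δ, dist z p ≤ dist z w)
    (hdq : dist z q = dist z p) (hWε : dist z p < epsFor a b δ) : q = p := by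
  obtain ⟨u, hu, rfl⟩ := hp
  obtain ⟨v, hv, rfl⟩ := hq
  have hduc : dist u c = δ := Metric.mem_sphere.mp hu
  have hdvc : dist v c = δ := Metric.mem_sphere.mp hv
  have hrab := Hc u hduc.le
  have hsab := Hc v hdvc.le
  have husq : (u 0 - c 0)^2 + (u 1 - c 1)^2 = δ^2 := by
    have := aux_dist_sq u c; rw [hduc] at this; linarith
  have hvsq : (v 0 - c 0)^2 + (v 1 - c 1)^2 = δ^2 := by
    have := aux_dist_sq v c; rw [hdvc] at this; linarith
  have hparam : ∀ t : ℝ,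
      polarMap (pt (c 0 + δ * Real.cos t) (c 1 + δ * Real.sin t))
        ∈ polarMap '' Metric.sphere c δ := by
    intro t
    apply Set.mem_image_of_mem
    have hd : dist (pt (c 0 + δ * Real.cos t) (c 1 + δ * Real.sin t)) c = δ := by
      apply aux_dist_of_sq hδ.le
      rw [aux_pt0, aux_pt1]
      have hpy := Real.sin_sq_add_cos_sq t
      linear_combination δ^2 * hpy
    rw [Metric.mem_sphere]
    exact hd
  have hmin' : ∀ t : ℝ, (z 0 - u 1*Real.cos (u 0))^2 + (z 1 - u 1*Real.sin (u 0))^2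
      ≤ (z 0 - (c 1 + δ*Real.sin t) * Real.cos (c 0 + δ*Real.cos t))^2
        + (z 1 - (c 1 + δ*Real.sin t) * Real.sin (c 0 + δ*Real.cos t))^2 := by
    intro t
    have h1 := hmin _ (hparam t)
    have h2 := pow_le_pow_left₀ dist_nonneg h1 2
    rw [aux_dist_sq, aux_dist_sq, aux_polar0, aux_polar1, aux_polar0, aux_polar1,
      aux_pt0, aux_pt1] at h2
    exact h2
  have hdq2 : (z 0 - v 1*Real.cos (v 0))^2 + (z 1 - v 1*Real.sin (v 0))^2
      = (z 0 - u 1*Real.cos (u 0))^2 + (z 1 - u 1*Real.sin (u 0))^2 := by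
    have h2 : dist z (polarMap v) ^ 2 = dist z (polarMap u) ^ 2 := by rw [hdq]
    rw [aux_dist_sq, aux_dist_sq, aux_polar0, aux_polar1, aux_polar0, aux_polar1] at h2
    exact h2
  have hW2 : (z 0 - u 1*Real.cos (u 0))^2 + (z 1 - u 1*Real.sin (u 0))^2
      = dist z (polarMap u) ^ 2 := by
    rw [aux_dist_sq, aux_polar0, aux_polar1]
  have hQ0 := aux_core ha hb hδ hδπ (c 0) (c 1) (z 0) (z 1) (u 0) (v 0) (u 1) (v 1)
    (dist z (polarMap u)) hrab.1 hrab.2 hsab.1 hsab.2 husq hvsq hmin' hdq2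
    dist_nonneg hW2 hWε
  have hd0 : dist (polarMap v) (polarMap u) = 0 := by
    apply aux_dist_of_sq le_rfl
    rw [aux_polar0, aux_polar1, aux_polar0, aux_polar1]
    simpa using hQ0
  exact dist_eq_zero.mp hd0

/-- For `a, b > 0` and `0 < δ < min {a, π}`, there is a uniform `ε > 0` such that the image
under the polar coordinate map of the boundary circle of any closed `δ`-ball contained in
`ℝ × [a, b]` has reach at least `ε`. -/
theorem reach_polar_image_of_circles
    (a b : ℝ) (ha : 0 < a) (hb : 0 < b) (δ : ℝ) (hδ : 0 < δ) (hδ' : δ < min a Real.pi) :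
    ∃ ε > (0:ℝ), ∀ c : EuclideanSpace ℝ (Fin 2),
      Metric.closedBall c δ ⊆ {v : EuclideanSpace ℝ (Fin 2) | v 1 ∈ Set.Icc a b} →
      ENNReal.ofReal ε ≤ reach (polarMap '' Metric.sphere c δ) := by
  have hδa : δ < a := lt_of_lt_of_le hδ' (min_le_left _ _)
  have hδπ : δ < Real.pi := lt_of_lt_of_le hδ' (min_le_right _ _)
  have hεpos := epsFor_pos (a := a) (b := b) (δ := δ) ha hb hδ hδπ
  refine ⟨epsFor a b δ, hεpos, ?_⟩
  intro c hc
  have Hc : ∀ v : EuclideanSpace ℝ (Fin 2), dist v c ≤ δ → a ≤ v 1 ∧ v 1 ≤ b := by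
    intro v hv
    have h1 := hc (Metric.mem_closedBall.mpr hv)
    exact ⟨h1.1, h1.2⟩
  set E := polarMap '' Metric.sphere c δ with hE
  have hcomp : IsCompact E := (isCompact_sphere c δ).image aux_cont
  have hne : E.Nonempty := ((NormedSpace.sphere_nonempty).mpr hδ.le).image _
  have hclo : closure E = E := hcomp.isClosed.closure_eq
  rw [reach]
  refine le_iInf fun y => le_iInf fun hy => ?_
  rw [reachAt]
  have hsub : EMetric.ball y (ENNReal.ofReal (epsFor a b δ)) ⊆ unp E := by
    intro z hz
    have hzy : dist z y < epsFor a b δ := by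
      rw [show z ∈ EMetric.ball y _ ↔ edist z y < _ from Iff.rfl, edist_dist] at hz
      exact (ENNReal.ofReal_lt_ofReal_iff hεpos).mp hz
    have hyE0 : Metric.infDist y E = 0 := Metric.infDist_zero_of_mem_closure hy
    have hinf : Metric.infDist z E < epsFor a b δ := by
      calc Metric.infDist z E ≤ Metric.infDist y E + dist z y :=
            Metric.infDist_le_infDist_add_dist
        _ = dist z y := by rw [hyE0]; ring
        _ < _ := hzy
    obtain ⟨p, hpE, hpd⟩ := hcomp.exists_infDist_eq_dist hne z
    refine ⟨p, ⟨subset_closure hpE, hpd.symm⟩, ?_⟩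
    rintro q ⟨hq1, hq2⟩
    have hqE : q ∈ E := hclo ▸ hq1
    apply aux_uniq ha hb hδ hδπ c z p q Hc hpE hqE
    · intro w hw
      rw [← hpd]
      exact Metric.infDist_le_dist_of_mem hw
    · exact hq2.trans hpd
    · rw [← hpd]
      exact hinf
  exact le_iSup_of_le (ENNReal.ofReal (epsFor a b δ)) (le_iSup_of_le hsub le_rfl)
end
end

section
/- There exist a compact set E ⊆ ℝ², ε > 0, and a Lipschitz function S : [0, 2π] → ℝ with S(x) > 0 for all x and S(0) = S(2π), such that ∂E_ε = { S(θ)·(cos θ, sin θ) : θ ∈ [0, 2π] } and S is not differentiable at any rational number q ∈ ℚ ∩ (0, 2π]. -/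
open Set Metric Filter
open scoped ENNReal NNReal

noncomputable section

namespace ND

open Real Pointwise

abbrev Pl := EuclideanSpace ℝ (Fin 2)

def qe : ℚ ≃ ℕ := Denumerable.eqv ℚ
def aa (n : ℕ) : ℝ := ((qe.symm n : ℚ) : ℝ)
def lam (n : ℕ) : ℝ := (1/8)^(n+1)
def trm (n : ℕ) (θ : ℝ) : ℝ := lam n * |Real.sin (θ - aa n)|
def T (θ : ℝ) : ℝ := ∑' n, trm n θ
def al : ℝ := 1/4
def Sf (θ : ℝ) : ℝ := 1 + al * (1 + T θ)
def Xp (θ : ℝ) : Pl := pt (Sf θ * Real.cos θ) (Sf θ * Real.sin θ)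
def ES : Set Pl := {c | ‖c‖ ≤ 1/2 ∧ ∀ θ : ℝ, 1 ≤ dist (Xp θ) c}

lemma lam_pos (n : ℕ) : 0 < lam n := by unfold lam; positivity
lemma lam_nonneg (n : ℕ) : 0 ≤ lam n := (lam_pos n).le

lemma summable_lam : Summable lam := by
  apply Summable.comp_injective (summable_geometric_of_lt_one (by norm_num : (0:ℝ) ≤ 1/8) (by norm_num)) (add_left_injective 1)

lemma tsum_lam : ∑' n, lam n = 1/7 := by
  have h : lam = fun n => (1/8 : ℝ) * (1/8)^n := by funext n; simp [lam]; ring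
  rw [h, tsum_mul_left, tsum_geometric_of_lt_one (by norm_num) (by norm_num)]
  norm_num

lemma trm_nonneg (n : ℕ) (θ : ℝ) : 0 ≤ trm n θ := by
  exact mul_nonneg (lam_nonneg n) (abs_nonneg _)

lemma trm_le (n : ℕ) (θ : ℝ) : trm n θ ≤ lam n := by
  have := Real.abs_sin_le_one (θ - aa n)
  calc trm n θ ≤ lam n * 1 := mul_le_mul_of_nonneg_left this (lam_nonneg n)
    _ = lam n := mul_one _

lemma summable_trm (θ : ℝ) : Summable (fun n => trm n θ) :=
  Summable.of_nonneg_of_le (fun n => trm_nonneg n θ) (fun n => trm_le n θ) summable_lam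

lemma T_nonneg (θ : ℝ) : 0 ≤ T θ := tsum_nonneg (fun n => trm_nonneg n θ)

lemma T_le (θ : ℝ) : T θ ≤ 1/7 := by
  rw [← tsum_lam]
  exact Summable.tsum_le_tsum (fun n => trm_le n θ) (summable_trm θ) summable_lam

lemma Sf_lb (θ : ℝ) : 5/4 ≤ Sf θ := by
  have := T_nonneg θ; simp only [Sf, al]; linarith

lemma Sf_ub (θ : ℝ) : Sf θ ≤ 13/10 := by
  have := T_le θ; simp only [Sf, al]; linarith

lemma Sf_pos (θ : ℝ) : 0 < Sf θ := lt_of_lt_of_le (by norm_num) (Sf_lb θ)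

lemma sin_lip (x y : ℝ) : |Real.sin x - Real.sin y| ≤ |x - y| := by
  rw [Real.sin_sub_sin]
  have h1 : |Real.sin ((x-y)/2)| ≤ |x-y|/2 := by
    have := Real.abs_sin_le_abs (x := (x-y)/2)
    rwa [abs_div, abs_two] at this
  calc |2 * Real.sin ((x-y)/2) * Real.cos ((x+y)/2)| ≤ 2 * |Real.sin ((x-y)/2)| * 1 := by
        rw [abs_mul, abs_mul]; gcongr <;> simp [Real.abs_cos_le_one, abs_nonneg]
    _ ≤ 2 * (|x-y|/2) * 1 := by gcongr
    _ = |x - y| := by ring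

lemma T_lip (x y : ℝ) : |T x - T y| ≤ (1/7) * |x - y| := by
  have hsub : ∀ n, |trm n x - trm n y| ≤ lam n * |x - y| := by
    intro n
    have h1 : |(|Real.sin (x - aa n)| - |Real.sin (y - aa n)|)| ≤ |x - y| := by
      refine le_trans (abs_abs_sub_abs_le_abs_sub _ _) ?_
      have := sin_lip (x - aa n) (y - aa n)
      simpa using this
    calc |trm n x - trm n y| = lam n * |(|Real.sin (x - aa n)| - |Real.sin (y - aa n)|)| := by
          rw [trm, trm, ← mul_sub, abs_mul, abs_of_nonneg (lam_nonneg n)]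
      _ ≤ lam n * |x - y| := mul_le_mul_of_nonneg_left h1 (lam_nonneg n)
  have hsummable : Summable (fun n => trm n x - trm n y) := (summable_trm x).sub (summable_trm y)
  have habs : Summable (fun n => |trm n x - trm n y|) := by
    apply Summable.of_nonneg_of_le (fun n => abs_nonneg _) hsub
    exact summable_lam.mul_right _
  calc |T x - T y| = |∑' n, (trm n x - trm n y)| := by
        rw [T, T, Summable.tsum_sub (summable_trm x) (summable_trm y)]
    _ ≤ ∑' n, |trm n x - trm n y| := by
        rw [abs_le]
        constructor
        · rw [← tsum_neg]
          exact Summable.tsum_le_tsum (fun n => neg_abs_le _) habs.neg hsummable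
        · exact Summable.tsum_le_tsum (fun n => le_abs_self _) hsummable habs
    _ ≤ ∑' n, lam n * |x - y| := Summable.tsum_le_tsum hsub habs (summable_lam.mul_right _)
    _ = (1/7) * |x - y| := by rw [tsum_mul_right, tsum_lam]

lemma T_per (θ : ℝ) : T (θ + 2*π) = T θ := by
  apply tsum_congr; intro n
  have : θ + 2*π - aa n = (θ - aa n) + 2*π := by ring
  rw [trm, trm, this, Real.sin_add_two_pi]

lemma Sf_per (θ : ℝ) : Sf (θ + 2*π) = Sf θ := by rw [Sf, Sf, T_per]

lemma Xp_per (θ : ℝ) : Xp (θ + 2*π) = Xp θ := by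
  rw [Xp, Xp, Sf_per]
  have h1 : Real.cos (θ + 2*π) = Real.cos θ := Real.cos_add_two_pi θ
  have h2 : Real.sin (θ + 2*π) = Real.sin θ := Real.sin_add_two_pi θ
  rw [h1, h2]


/-! ### Supporting sinusoids -/

def okb (q b : ℝ) : Prop := ∀ θ : ℝ, T q * Real.cos (θ - q) + b * Real.sin (θ - q) ≤ T θ

lemma summable_bterm (q : ℝ) (s : ℕ → ℝ) (hs : ∀ n, |s n| ≤ 1) :
    Summable (fun n => lam n * s n * Real.cos (q - aa n)) := by
  have habs : Summable (fun n => |lam n * s n * Real.cos (q - aa n)|) := by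
    apply Summable.of_nonneg_of_le (fun n => abs_nonneg _) _ summable_lam
    intro n
    rw [abs_mul, abs_mul, abs_of_nonneg (lam_nonneg n)]
    calc lam n * |s n| * |Real.cos (q - aa n)| ≤ lam n * 1 * 1 := by
          apply mul_le_mul (mul_le_mul_of_nonneg_left (hs n) (lam_nonneg n)) (Real.abs_cos_le_one _) (abs_nonneg _)
          exact mul_nonneg (lam_nonneg n) zero_le_one
      _ = lam n := by ring
  exact habs.of_abs

lemma abs_tsum_le_of_abs_le {f : ℕ → ℝ} {g : ℕ → ℝ} (h : ∀ n, |f n| ≤ g n)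
    (hg : Summable g) : |∑' n, f n| ≤ ∑' n, g n := by
  have hf : Summable f := by
    apply Summable.of_abs
    exact Summable.of_nonneg_of_le (fun n => abs_nonneg _) h hg
  have habs : Summable (fun n => |f n|) := Summable.of_nonneg_of_le (fun n => abs_nonneg _) h hg
  rw [abs_le]
  constructor
  · rw [← tsum_neg]
    refine Summable.tsum_le_tsum (fun n => ?_) hg.neg hf
    have := (abs_le.1 (h n)).1; linarith [neg_abs_le (f n), (h n)]
  · exact le_trans (Summable.tsum_le_tsum (fun n => le_abs_self _) hf habs) (Summable.tsum_le_tsum h habs hg)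

lemma okb_master (q : ℝ) (s : ℕ → ℝ) (hs : ∀ n, |s n| ≤ 1)
    (hsgn : ∀ n, s n * Real.sin (q - aa n) = |Real.sin (q - aa n)|) :
    okb q (∑' n, lam n * s n * Real.cos (q - aa n)) ∧
      |∑' n, lam n * s n * Real.cos (q - aa n)| ≤ 1/7 := by
  have hbsum := summable_bterm q s hs
  constructor
  · intro θ
    have key : ∀ n, trm n q * Real.cos (θ - q) + (lam n * s n * Real.cos (q - aa n)) * Real.sin (θ - q) ≤ trm n θ := by
      intro n
      have hexp : s n * Real.sin (θ - aa n)
          = |Real.sin (q - aa n)| * Real.cos (θ - q) + (s n * Real.cos (q - aa n)) * Real.sin (θ - q) := by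
        have : θ - aa n = (q - aa n) + (θ - q) := by ring
        rw [this, Real.sin_add]
        rw [ ← hsgn n]; ring
      have hle : s n * Real.sin (θ - aa n) ≤ |Real.sin (θ - aa n)| := by
        calc s n * Real.sin (θ - aa n) ≤ |s n * Real.sin (θ - aa n)| := le_abs_self _
          _ = |s n| * |Real.sin (θ - aa n)| := abs_mul _ _
          _ ≤ 1 * |Real.sin (θ - aa n)| := mul_le_mul_of_nonneg_right (hs n) (abs_nonneg _)
          _ = |Real.sin (θ - aa n)| := one_mul _
      rw [hexp] at hle
      have := mul_le_mul_of_nonneg_left hle (lam_nonneg n)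
      calc trm n q * Real.cos (θ - q) + (lam n * s n * Real.cos (q - aa n)) * Real.sin (θ - q)
          = lam n * (|Real.sin (q - aa n)| * Real.cos (θ - q) + (s n * Real.cos (q - aa n)) * Real.sin (θ - q)) := by
            rw [trm]; ring
        _ ≤ lam n * |Real.sin (θ - aa n)| := this
        _ = trm n θ := rfl
    have h1 : T q * Real.cos (θ - q) = ∑' n, trm n q * Real.cos (θ - q) := by
      rw [tsum_mul_right]; rfl
    have h2 : (∑' n, lam n * s n * Real.cos (q - aa n)) * Real.sin (θ - q)
        = ∑' n, (lam n * s n * Real.cos (q - aa n)) * Real.sin (θ - q) := by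
      rw [tsum_mul_right]
    rw [h1, h2, ← Summable.tsum_add ((summable_trm q).mul_right _) (hbsum.mul_right _)]
    refine Summable.tsum_le_tsum key ?_ (summable_trm θ)
    exact ((summable_trm q).mul_right _).add (hbsum.mul_right _)
  · have h := abs_tsum_le_of_abs_le (f := fun n => lam n * s n * Real.cos (q - aa n)) (g := lam) ?_ summable_lam
    · rwa [tsum_lam] at h
    · intro n
      rw [abs_mul, abs_mul, abs_of_nonneg (lam_nonneg n)]
      calc lam n * |s n| * |Real.cos (q - aa n)| ≤ lam n * 1 * 1 := by
            apply mul_le_mul (mul_le_mul_of_nonneg_left (hs n) (lam_nonneg n)) (Real.abs_cos_le_one _) (abs_nonneg _)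
            exact mul_nonneg (lam_nonneg n) zero_le_one
        _ = lam n := by ring

lemma sign_spec (x : ℝ) : |Real.sign x| ≤ 1 ∧ Real.sign x * x = |x| := by
  rcases lt_trichotomy x 0 with h|h|h
  · rw [Real.sign_of_neg h, abs_of_neg h]; norm_num
  · simp [h]
  · rw [Real.sign_of_pos h, abs_of_pos h]; norm_num

lemma okb_generic (q : ℝ) : ∃ b : ℝ, okb q b ∧ |b| ≤ 1/7 := by
  obtain ⟨h1, h2⟩ := okb_master q (fun n => Real.sign (Real.sin (q - aa n)))
    (fun n => (sign_spec _).1) (fun n => (sign_spec _).2)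
  exact ⟨_, h1, h2⟩

/-- the index of a rational -/
def idx (r : ℚ) : ℕ := qe r

lemma aa_idx (r : ℚ) : aa (idx r) = (r : ℝ) := by
  rw [aa, idx, Equiv.symm_apply_apply]

def srat (m : ℕ) (τ : ℝ) : ℕ → ℝ :=
  fun n => if n = m then τ else Real.sign (Real.sin (aa m - aa n))

def brat (m : ℕ) (τ : ℝ) : ℝ := ∑' n, lam n * srat m τ n * Real.cos (aa m - aa n)

lemma okb_brat (m : ℕ) (τ : ℝ) (hτ : |τ| ≤ 1) : okb (aa m) (brat m τ) ∧ |brat m τ| ≤ 1/7 := by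
  apply okb_master
  · intro n
    by_cases h : n = m
    · simp [srat, h, hτ]
    · simp [srat, h, (sign_spec _).1]
  · intro n
    by_cases h : n = m
    · subst h; simp [srat]
    · simp only [srat, if_neg h]
      exact (sign_spec _).2

lemma brat_sub (m : ℕ) : brat m 1 - brat m (-1) = 2 * lam m := by
  rw [brat, brat, ← Summable.tsum_sub (summable_bterm _ _ (fun n => by
      by_cases h : n = m
      · simp [srat, h]
      · simp [srat, h, (sign_spec _).1])) (summable_bterm _ _ (fun n => by
      by_cases h : n = m
      · simp [srat, h]
      · simp [srat, h, (sign_spec _).1]))]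
  have : (fun n => lam n * srat m 1 n * Real.cos (aa m - aa n) - lam n * srat m (-1) n * Real.cos (aa m - aa n))
      = fun n => if n = m then 2 * lam m else 0 := by
    funext n
    by_cases h : n = m
    · subst h; simp [srat]; ring
    · simp [srat, h]
  rw [this, tsum_ite_eq]


/-! ### coordinate helpers -/

lemma norm_sq' (x : Pl) : ‖x‖^2 = (x 0)^2 + (x 1)^2 := by
  rw [EuclideanSpace.norm_eq]
  rw [Real.sq_sqrt (by positivity)]
  simp [Fin.sum_univ_two, sq_abs]

lemma dist_sq' (x y : Pl) : dist x y ^ 2 = (x 0 - y 0)^2 + (x 1 - y 1)^2 := by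
  rw [EuclideanSpace.dist_eq]
  rw [Real.sq_sqrt (by positivity)]
  simp [Fin.sum_univ_two, Real.dist_eq, sq_abs]

lemma pt0 (a b : ℝ) : pt a b 0 = a := rfl
lemma pt1 (a b : ℝ) : pt a b 1 = b := rfl

lemma pt_eta (x : Pl) : pt (x 0) (x 1) = x := by
  ext i; fin_cases i <;> rfl

/-! ### the touching circle -/

def m0 (q b : ℝ) : ℝ := Real.sqrt ((Sf q)^2 + (al*b)^2)

def cen (q b : ℝ) : Pl :=
  pt (Sf q * Real.cos q - (Sf q * Real.cos q + al*b*Real.sin q)/(m0 q b))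
     (Sf q * Real.sin q - (Sf q * Real.sin q - al*b*Real.cos q)/(m0 q b))

section core
variable {q b : ℝ}

lemma m0_sq (q b : ℝ) : (m0 q b)^2 = (Sf q)^2 + (al*b)^2 :=
  Real.sq_sqrt (by positivity)

lemma m0_ge (q b : ℝ) : Sf q ≤ m0 q b := by
  rw [m0]
  calc Sf q = Real.sqrt ((Sf q)^2) := (Real.sqrt_sq (Sf_pos q).le).symm
    _ ≤ _ := Real.sqrt_le_sqrt (by nlinarith [sq_nonneg (al*b)])

lemma m0_pos (q b : ℝ) : 0 < m0 q b := lt_of_lt_of_le (Sf_pos q) (m0_ge q b)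

lemma hB_bound (hb : |b| ≤ 1/7) : (al*b)^2 ≤ 1/784 := by
  have h1 : b^2 ≤ 1/49 := by nlinarith [abs_nonneg b, sq_abs b]
  rw [al]; nlinarith

lemma m0_ub (hb : |b| ≤ 1/7) : m0 q b ≤ Sf q + 1/1000 := by
  have h2 := hB_bound (b := b) hb
  have h3 := Sf_lb q
  have key : (Sf q)^2 + (al*b)^2 ≤ (Sf q + 1/1000)^2 := by nlinarith
  calc m0 q b = Real.sqrt ((Sf q)^2 + (al*b)^2) := rfl
    _ ≤ Real.sqrt ((Sf q + 1/1000)^2) := Real.sqrt_le_sqrt key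
    _ = Sf q + 1/1000 := Real.sqrt_sq (by linarith)

/-- the key algebraic inequality -/
lemma key_alg (P Q C Z B : ℝ) (hP1 : 5/4 ≤ P) (hQ1 : 5/4 ≤ Q)
    (htrig : C^2 + Z^2 = 1) (hC : C ≤ 1) (hB : B^2 ≤ 1/784)
    (hsupp : P*C + B*Z + (5/4)*(1-C) ≤ Q) :
    0 ≤ P*(Q^2+P^2-2*P*Q*C) + 2*(P*Q*C - P^2 - B*Q*Z) := by
  have hBZ : B*Z ≤ Q - P*C - (5/4)*(1-C) := by linarith
  have hP0 : (0:ℝ) < P := by linarith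
  have t1 : P*(B*Z) ≤ P*(Q - P*C - (5/4)*(1-C)) := mul_le_mul_of_nonneg_left hBZ hP0.le
  have t2 : (B*Z)*(Q-P) ≤ (Q-P)^2/2 + B^2*Z^2/2 := by nlinarith [sq_nonneg (Q-P-B*Z)]
  have t3 : Z^2 ≤ 2*(1-C) := by nlinarith [sq_nonneg Z]
  have t4 : (0:ℝ) ≤ (P-1)*(Q-1) := by nlinarith
  have hsplit : B*Q*Z = P*(B*Z) + (B*Z)*(Q-P) := by ring
  have hidd : P*(Q^2+P^2-2*P*Q*C)/2 + (P*Q*C - P^2 - (P*(Q - P*C - (5/4)*(1-C)) + ((Q-P)^2/2 + B^2*Z^2/2)))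
      = (P-1)*(Q-P)^2/2 + (1-C)*P*((P-1)*(Q-1) + 1/4) - B^2*Z^2/2 := by ring
  have hfin : 0 ≤ (P-1)*(Q-P)^2/2 + (1-C)*P*((P-1)*(Q-1) + 1/4) - B^2*Z^2/2 := by
    have hZ2B : B^2*Z^2 ≤ (1/784)*(2*(1-C)) := by nlinarith [sq_nonneg B, sq_nonneg Z]
    nlinarith [sq_nonneg (Q-P), mul_nonneg (mul_nonneg (sub_nonneg.2 hC) hP0.le) t4]
  nlinarith [t1, t2, hsplit, hidd, hfin]

lemma supp_S (hok : okb q b) (θ : ℝ) :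
    Sf q * Real.cos (θ - q) + (al*b) * Real.sin (θ - q) + (5/4)*(1 - Real.cos (θ - q)) ≤ Sf θ := by
  have h := hok θ
  simp only [Sf, al] at *
  nlinarith [h]

lemma cen_apply0 (q b : ℝ) :
    cen q b 0 = Sf q * Real.cos q - (Sf q * Real.cos q + al*b*Real.sin q) * (m0 q b)⁻¹ := by
  rw [cen, pt0, div_eq_mul_inv]

lemma cen_apply1 (q b : ℝ) :
    cen q b 1 = Sf q * Real.sin q - (Sf q * Real.sin q - al*b*Real.cos q) * (m0 q b)⁻¹ := by
  rw [cen, pt1, div_eq_mul_inv]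

lemma Xp_apply0 (θ : ℝ) : Xp θ 0 = Sf θ * Real.cos θ := rfl
lemma Xp_apply1 (θ : ℝ) : Xp θ 1 = Sf θ * Real.sin θ := rfl

lemma hm2_lemma (q b : ℝ) : ((m0 q b)⁻¹)^2 * ((Sf q)^2 + (al*b)^2) = 1 := by
  have h := m0_sq q b
  have hne : m0 q b ≠ 0 := (m0_pos q b).ne'
  rw [← h]
  field_simp

lemma cen_dist_ge (hok : okb q b) (hb : |b| ≤ 1/7) (θ : ℝ) :
    1 ≤ dist (Xp θ) (cen q b) := by
  have him : (m0 q b)⁻¹ * m0 q b = 1 := inv_mul_cancel₀ (m0_pos q b).ne'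
  have hi0 : 0 ≤ (m0 q b)⁻¹ := inv_nonneg.2 (m0_pos q b).le
  have hm2 := hm2_lemma q b
  have hq : Real.cos q ^2 + Real.sin q ^2 = 1 := by
    rw [add_comm]; exact Real.sin_sq_add_cos_sq q
  have hθ : Real.cos θ ^2 + Real.sin θ ^2 = 1 := by
    rw [add_comm]; exact Real.sin_sq_add_cos_sq θ
  have hCcos : Real.cos (θ - q) = Real.cos θ * Real.cos q + Real.sin θ * Real.sin q := by
    rw [Real.cos_sub]
  have hZsin : Real.sin (θ - q) = Real.sin θ * Real.cos q - Real.cos θ * Real.sin q := by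
    rw [Real.sin_sub]
  have hCZ : (Real.cos θ * Real.cos q + Real.sin θ * Real.sin q)^2
      + (Real.sin θ * Real.cos q - Real.cos θ * Real.sin q)^2 = 1 := by
    rw [← hCcos, ← hZsin, add_comm]; exact Real.sin_sq_add_cos_sq (θ - q)
  have hC1 : Real.cos θ * Real.cos q + Real.sin θ * Real.sin q ≤ 1 := by
    rw [← hCcos]; exact Real.cos_le_one _
  have hdist2 : dist (Xp θ) (cen q b) ^2
      = ((Sf θ)^2 + (Sf q)^2 - 2*(Sf q)*(Sf θ)*(Real.cos θ * Real.cos q + Real.sin θ * Real.sin q))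
        + 2*(m0 q b)⁻¹*((Sf q)*(Sf θ)*(Real.cos θ * Real.cos q + Real.sin θ * Real.sin q) - (Sf q)^2
            - (al*b)*(Sf θ)*(Real.sin θ * Real.cos q - Real.cos θ * Real.sin q)) + 1 := by
    rw [dist_sq', Xp_apply0, Xp_apply1, cen_apply0, cen_apply1]
    linear_combination (((m0 q b)⁻¹)^2*((Sf q)^2+(al*b)^2) - 2*(m0 q b)⁻¹*(Sf q)^2 + (Sf q)^2) * hq
      + (Sf θ)^2 * hθ + hm2
  have hsupp : (Sf q)*(Real.cos θ * Real.cos q + Real.sin θ * Real.sin q)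
      + (al*b)*(Real.sin θ * Real.cos q - Real.cos θ * Real.sin q)
      + (5/4)*(1-(Real.cos θ * Real.cos q + Real.sin θ * Real.sin q)) ≤ Sf θ := by
    have h := supp_S hok θ
    rw [hCcos, hZsin] at h
    linarith
  have hkey := key_alg (Sf q) (Sf θ) (Real.cos θ * Real.cos q + Real.sin θ * Real.sin q)
    (Real.sin θ * Real.cos q - Real.cos θ * Real.sin q) (al*b)
    (Sf_lb q) (Sf_lb θ) hCZ hC1 (hB_bound hb) hsupp
  have hD2 : 0 ≤ (Sf θ)^2 + (Sf q)^2 - 2*(Sf q)*(Sf θ)*(Real.cos θ * Real.cos q + Real.sin θ * Real.sin q) := by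
    nlinarith [sq_nonneg (Sf θ - Sf q), mul_pos (Sf_pos θ) (Sf_pos q)]
  have hiP : (m0 q b)⁻¹ * (Sf q) ≤ 1 := by
    calc (m0 q b)⁻¹ * Sf q ≤ (m0 q b)⁻¹ * m0 q b := mul_le_mul_of_nonneg_left (m0_ge q b) hi0
      _ = 1 := him
  have hge : 1 ≤ dist (Xp θ) (cen q b) ^2 := by
    rw [hdist2]
    set i := (m0 q b)⁻¹ with hidef
    set P := Sf q with hPdef
    set Q := Sf θ with hQdef
    set C := Real.cos θ * Real.cos q + Real.sin θ * Real.sin q with hCdef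
    set Z := Real.sin θ * Real.cos q - Real.cos θ * Real.sin q with hZdef
    have e : Q^2+P^2-2*P*Q*C + 2*i*(P*Q*C - P^2 - (al*b)*Q*Z)
        = (Q^2+P^2-2*P*Q*C)*(1-i*P) + i*(P*(Q^2+P^2-2*P*Q*C) + 2*(P*Q*C-P^2-(al*b)*Q*Z)) := by ring
    have h1 : 0 ≤ (Q^2+P^2-2*P*Q*C)*(1-i*P) := mul_nonneg hD2 (by linarith)
    have h2 : 0 ≤ i*(P*(Q^2+P^2-2*P*Q*C) + 2*(P*Q*C-P^2-(al*b)*Q*Z)) := by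
      apply mul_nonneg hi0
      exact hkey
    linarith [e, h1, h2]
  nlinarith [dist_nonneg (x := Xp θ) (y := cen q b), hge]

lemma cen_norm_sq (q b : ℝ) :
    ‖cen q b‖^2 = (Sf q)^2 - 2*(m0 q b)⁻¹*(Sf q)^2 + 1 := by
  have hq : Real.cos q ^2 + Real.sin q ^2 = 1 := by
    rw [add_comm]; exact Real.sin_sq_add_cos_sq q
  have hm2 := hm2_lemma q b
  rw [norm_sq', cen_apply0, cen_apply1]
  linear_combination ((Sf q)^2 - 2*(m0 q b)⁻¹*(Sf q)^2 + ((m0 q b)⁻¹)^2*((Sf q)^2+(al*b)^2)) * hq + hm2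

lemma cen_norm (hb : |b| ≤ 1/7) : ‖cen q b‖ ≤ 1/2 := by
  have him : (m0 q b)⁻¹ * m0 q b = 1 := inv_mul_cancel₀ (m0_pos q b).ne'
  have hi0 : 0 ≤ (m0 q b)⁻¹ := inv_nonneg.2 (m0_pos q b).le
  have hub := m0_ub (q := q) hb
  have hP1 := Sf_lb q
  have hP2 := Sf_ub q
  have hilb : 1 ≤ (m0 q b)⁻¹ * (Sf q + 1/1000) := by
    calc 1 = (m0 q b)⁻¹ * m0 q b := him.symm
      _ ≤ (m0 q b)⁻¹ * (Sf q + 1/1000) := mul_le_mul_of_nonneg_left hub hi0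
  have hiub : (m0 q b)⁻¹ ≤ 4/5 := by
    nlinarith [him, m0_ge q b]
  have hsq : ‖cen q b‖^2 ≤ 1/4 := by
    rw [cen_norm_sq]
    nlinarith [mul_nonneg (by linarith : (0:ℝ) ≤ 2*Sf q) (by linarith : (0:ℝ) ≤ (m0 q b)⁻¹ * (Sf q + 1/1000) - 1)]
  nlinarith [norm_nonneg (cen q b), hsq]

lemma cen_mem (hok : okb q b) (hb : |b| ≤ 1/7) : cen q b ∈ ES :=
  ⟨cen_norm hb, fun θ => cen_dist_ge hok hb θ⟩

lemma cen_touch (q b : ℝ) : dist (Xp q) (cen q b) = 1 := by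
  have hq : Real.cos q ^2 + Real.sin q ^2 = 1 := by
    rw [add_comm]; exact Real.sin_sq_add_cos_sq q
  have hm2 := hm2_lemma q b
  have hd2 : dist (Xp q) (cen q b) ^ 2 = 1 := by
    rw [dist_sq', Xp_apply0, Xp_apply1, cen_apply0, cen_apply1]
    linear_combination (((m0 q b)⁻¹)^2*((Sf q)^2+(al*b)^2)) * hq + hm2
  have h0 : (0:ℝ) ≤ dist (Xp q) (cen q b) := dist_nonneg
  have : (dist (Xp q) (cen q b) - 1) * (dist (Xp q) (cen q b) + 1) = 0 := by
    linear_combination hd2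
  rcases mul_eq_zero.1 this with h | h
  · linarith
  · linarith

lemma cen_cover (hb : |b| ≤ 1/7) (r : ℝ) (h0 : 0 ≤ r) (h1 : r ≤ Sf q) :
    dist (pt (r*Real.cos q) (r*Real.sin q)) (cen q b) ≤ 1 := by
  have hq : Real.cos q ^2 + Real.sin q ^2 = 1 := by
    rw [add_comm]; exact Real.sin_sq_add_cos_sq q
  have hm2 := hm2_lemma q b
  have him : (m0 q b)⁻¹ * m0 q b = 1 := inv_mul_cancel₀ (m0_pos q b).ne'
  have hi0 : 0 ≤ (m0 q b)⁻¹ := inv_nonneg.2 (m0_pos q b).le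
  have hub := m0_ub (q := q) hb
  have hd2 : dist (pt (r*Real.cos q) (r*Real.sin q)) (cen q b) ^ 2
      = r^2 - 2*r*(Sf q - Sf q*(m0 q b)⁻¹) + ((Sf q)^2 - 2*(m0 q b)⁻¹*(Sf q)^2 + 1) := by
    rw [dist_sq', pt0, pt1, cen_apply0, cen_apply1]
    linear_combination (r^2 - 2*r*(Sf q - Sf q*(m0 q b)⁻¹) + (Sf q)^2 - 2*(m0 q b)⁻¹*(Sf q)^2
      + ((m0 q b)⁻¹)^2*((Sf q)^2+(al*b)^2)) * hq + hm2
  have hienough : 1 - 2*(m0 q b)⁻¹ ≤ 0 := by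
    nlinarith [him, Sf_lb q, Sf_ub q]
  have hfac : dist (pt (r*Real.cos q) (r*Real.sin q)) (cen q b) ^ 2 - 1
      = (r - Sf q) * (r - (Sf q - 2*Sf q*(m0 q b)⁻¹)) := by
    rw [hd2]; ring
  have hsecond : 0 ≤ r - (Sf q - 2*Sf q*(m0 q b)⁻¹) := by
    nlinarith [Sf_pos q]
  have hprod : (r - Sf q) * (r - (Sf q - 2*Sf q*(m0 q b)⁻¹)) ≤ 0 :=
    mul_nonpos_of_nonpos_of_nonneg (by linarith) hsecond
  nlinarith [dist_nonneg (x := pt (r*Real.cos q) (r*Real.sin q)) (y := cen q b), hfac, hprod]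

/-! ### the radial function of a disc -/

def fb (c : Pl) (θ : ℝ) : ℝ :=
  (c 0 * Real.cos θ + c 1 * Real.sin θ) + Real.sqrt (1 - (c 0 * Real.sin θ - c 1 * Real.cos θ)^2)

lemma ES_coord_sq {c : Pl} (hc : c ∈ ES) : (c 0)^2 + (c 1)^2 ≤ 1/4 := by
  have h1 : ‖c‖^2 ≤ 1/4 := by nlinarith [norm_nonneg c, hc.1]
  rw [norm_sq'] at h1; exact h1

lemma pw_sq {c : Pl} (hc : c ∈ ES) (θ : ℝ) :
    (c 0 * Real.cos θ + c 1 * Real.sin θ)^2 ≤ 1/4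
      ∧ (c 0 * Real.sin θ - c 1 * Real.cos θ)^2 ≤ 1/4 := by
  have hθ : Real.cos θ ^2 + Real.sin θ ^2 = 1 := by
    rw [add_comm]; exact Real.sin_sq_add_cos_sq θ
  have hsum : (c 0 * Real.cos θ + c 1 * Real.sin θ)^2 + (c 0 * Real.sin θ - c 1 * Real.cos θ)^2
      = (c 0)^2 + (c 1)^2 := by linear_combination ((c 0)^2 + (c 1)^2) * hθ
  have hb := ES_coord_sq hc
  constructor
  · nlinarith [sq_nonneg (c 0 * Real.sin θ - c 1 * Real.cos θ)]
  · nlinarith [sq_nonneg (c 0 * Real.cos θ + c 1 * Real.sin θ)]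

lemma dist_sq_polar (c : Pl) (r θ : ℝ) :
    dist (pt (r*Real.cos θ) (r*Real.sin θ)) c ^ 2
      = r^2 - 2*r*(c 0 * Real.cos θ + c 1 * Real.sin θ) + ((c 0)^2 + (c 1)^2) := by
  have hθ : Real.cos θ ^2 + Real.sin θ ^2 = 1 := by
    rw [add_comm]; exact Real.sin_sq_add_cos_sq θ
  rw [dist_sq', pt0, pt1]
  linear_combination r^2 * hθ

lemma dist_sq_Xp (c : Pl) (θ : ℝ) :
    dist (Xp θ) c ^ 2
      = (Sf θ)^2 - 2*(Sf θ)*(c 0 * Real.cos θ + c 1 * Real.sin θ) + ((c 0)^2 + (c 1)^2) := by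
  have hθ : Real.cos θ ^2 + Real.sin θ ^2 = 1 := by
    rw [add_comm]; exact Real.sin_sq_add_cos_sq θ
  rw [dist_sq', Xp_apply0, Xp_apply1]
  linear_combination (Sf θ)^2 * hθ

lemma fb_le_Sf {c : Pl} (hc : c ∈ ES) (θ : ℝ) : fb c θ ≤ Sf θ := by
  have hθ : Real.cos θ ^2 + Real.sin θ ^2 = 1 := by
    rw [add_comm]; exact Real.sin_sq_add_cos_sq θ
  have hd := hc.2 θ
  have hd2 : 1 ≤ dist (Xp θ) c ^ 2 := by nlinarith [dist_nonneg (x := Xp θ) (y := c)]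
  rw [dist_sq_Xp] at hd2
  have hsum : (c 0 * Real.cos θ + c 1 * Real.sin θ)^2 + (c 0 * Real.sin θ - c 1 * Real.cos θ)^2
      = (c 0)^2 + (c 1)^2 := by linear_combination ((c 0)^2 + (c 1)^2) * hθ
  have hp2 := (pw_sq hc θ).1
  have hQp : 3/4 ≤ Sf θ - (c 0 * Real.cos θ + c 1 * Real.sin θ) := by
    nlinarith [Sf_lb θ]
  have hsqle : (1 : ℝ) - (c 0 * Real.sin θ - c 1 * Real.cos θ)^2
      ≤ (Sf θ - (c 0 * Real.cos θ + c 1 * Real.sin θ))^2 := by nlinarith [hd2, hsum]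
  have : Real.sqrt (1 - (c 0 * Real.sin θ - c 1 * Real.cos θ)^2)
      ≤ Sf θ - (c 0 * Real.cos θ + c 1 * Real.sin θ) := by
    calc Real.sqrt (1 - (c 0 * Real.sin θ - c 1 * Real.cos θ)^2)
        ≤ Real.sqrt ((Sf θ - (c 0 * Real.cos θ + c 1 * Real.sin θ))^2) := Real.sqrt_le_sqrt hsqle
      _ = Sf θ - (c 0 * Real.cos θ + c 1 * Real.sin θ) := Real.sqrt_sq (by linarith)
  rw [fb]; linarith

lemma r_le_fb {c : Pl} (hc : c ∈ ES) (θ r : ℝ) (hr : 0 ≤ r)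
    (hd : dist (pt (r*Real.cos θ) (r*Real.sin θ)) c ≤ 1) : r ≤ fb c θ := by
  have hθ : Real.cos θ ^2 + Real.sin θ ^2 = 1 := by
    rw [add_comm]; exact Real.sin_sq_add_cos_sq θ
  have hd2 : dist (pt (r*Real.cos θ) (r*Real.sin θ)) c ^ 2 ≤ 1 := by
    nlinarith [dist_nonneg (x := pt (r*Real.cos θ) (r*Real.sin θ)) (y := c)]
  rw [dist_sq_polar] at hd2
  have hsum : (c 0 * Real.cos θ + c 1 * Real.sin θ)^2 + (c 0 * Real.sin θ - c 1 * Real.cos θ)^2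
      = (c 0)^2 + (c 1)^2 := by linear_combination ((c 0)^2 + (c 1)^2) * hθ
  have hsqle : (r - (c 0 * Real.cos θ + c 1 * Real.sin θ))^2
      ≤ 1 - (c 0 * Real.sin θ - c 1 * Real.cos θ)^2 := by nlinarith [hd2, hsum]
  have habs : r - (c 0 * Real.cos θ + c 1 * Real.sin θ)
      ≤ Real.sqrt (1 - (c 0 * Real.sin θ - c 1 * Real.cos θ)^2) := by
    calc r - (c 0 * Real.cos θ + c 1 * Real.sin θ)
        ≤ |r - (c 0 * Real.cos θ + c 1 * Real.sin θ)| := le_abs_self _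
      _ = Real.sqrt ((r - (c 0 * Real.cos θ + c 1 * Real.sin θ))^2) := (Real.sqrt_sq_eq_abs _).symm
      _ ≤ _ := Real.sqrt_le_sqrt hsqle
  rw [fb]; linarith

lemma cen_w_val (q b : ℝ) :
    cen q b 0 * Real.sin q - cen q b 1 * Real.cos q = -(al*b)*(m0 q b)⁻¹ := by
  have hq : Real.cos q ^2 + Real.sin q ^2 = 1 := by
    rw [add_comm]; exact Real.sin_sq_add_cos_sq q
  rw [cen_apply0, cen_apply1]
  linear_combination (-(al*b)*(m0 q b)⁻¹) * hq

lemma cen_p_val (q b : ℝ) :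
    cen q b 0 * Real.cos q + cen q b 1 * Real.sin q = Sf q - Sf q * (m0 q b)⁻¹ := by
  have hq : Real.cos q ^2 + Real.sin q ^2 = 1 := by
    rw [add_comm]; exact Real.sin_sq_add_cos_sq q
  rw [cen_apply0, cen_apply1]
  linear_combination (Sf q - Sf q * (m0 q b)⁻¹) * hq

lemma cen_sqrt_arg (q b : ℝ) :
    1 - (cen q b 0 * Real.sin q - cen q b 1 * Real.cos q)^2 = (Sf q * (m0 q b)⁻¹)^2 := by
  rw [cen_w_val]
  linear_combination (-1 : ℝ) * hm2_lemma q b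

lemma cen_sqrt_val (q b : ℝ) :
    Real.sqrt (1 - (cen q b 0 * Real.sin q - cen q b 1 * Real.cos q)^2) = Sf q * (m0 q b)⁻¹ := by
  rw [cen_sqrt_arg]
  exact Real.sqrt_sq (mul_nonneg (Sf_pos q).le (inv_nonneg.2 (m0_pos q b).le))

lemma fb_cen_q (q b : ℝ) : fb (cen q b) q = Sf q := by
  rw [fb, cen_sqrt_val, cen_p_val]; ring

lemma fb_cen_deriv (q b : ℝ) : HasDerivAt (fb (cen q b)) (al*b) q := by
  have hi0 : 0 < (m0 q b)⁻¹ := inv_pos.2 (m0_pos q b)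
  have him : (m0 q b)⁻¹ * m0 q b = 1 := inv_mul_cancel₀ (m0_pos q b).ne'
  have hwd : HasDerivAt (fun θ => cen q b 0 * Real.sin θ - cen q b 1 * Real.cos θ)
      (cen q b 0 * Real.cos q + cen q b 1 * Real.sin q) q := by
    have h1 := (Real.hasDerivAt_sin q).const_mul (cen q b 0)
    have h2 := (Real.hasDerivAt_cos q).const_mul (cen q b 1)
    have h3 := h1.fun_sub h2
    refine h3.congr_deriv ?_; ring
  have hpd : HasDerivAt (fun θ => cen q b 0 * Real.cos θ + cen q b 1 * Real.sin θ)
      (-(cen q b 0 * Real.sin q - cen q b 1 * Real.cos q)) q := by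
    have h1 := (Real.hasDerivAt_cos q).const_mul (cen q b 0)
    have h2 := (Real.hasDerivAt_sin q).const_mul (cen q b 1)
    have h3 := h1.fun_add h2
    refine h3.congr_deriv ?_; ring
  have hgd : HasDerivAt (fun θ => 1 - (cen q b 0 * Real.sin θ - cen q b 1 * Real.cos θ)^2)
      (-(2 * (cen q b 0 * Real.sin q - cen q b 1 * Real.cos q)
          * (cen q b 0 * Real.cos q + cen q b 1 * Real.sin q))) q := by
    have h1 := hwd.pow 2
    have h2 := (hasDerivAt_const q (1:ℝ)).fun_sub h1
    refine h2.congr_deriv ?_; push_cast; ring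
  have hne : 1 - (cen q b 0 * Real.sin q - cen q b 1 * Real.cos q)^2 ≠ 0 := by
    rw [cen_sqrt_arg]
    exact pow_ne_zero 2 (mul_pos (Sf_pos q) (inv_pos.2 (m0_pos q b))).ne'
  have hsd := hgd.sqrt hne
  have htot := hpd.fun_add hsd
  have hfb : (fun θ => (cen q b 0 * Real.cos θ + cen q b 1 * Real.sin θ)
      + Real.sqrt (1 - (cen q b 0 * Real.sin θ - cen q b 1 * Real.cos θ)^2)) = fb (cen q b) := by
    funext θ; rw [fb]
  rw [hfb] at htot
  refine htot.congr_deriv ?_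
  rw [cen_sqrt_val, cen_w_val, cen_p_val]
  have hPi : (2*(Sf q * (m0 q b)⁻¹)) ≠ 0 :=
    mul_ne_zero two_ne_zero (mul_pos (Sf_pos q) (inv_pos.2 (m0_pos q b))).ne'
  have hdiv : (-(2*(-(al*b)*(m0 q b)⁻¹)*(Sf q - Sf q*(m0 q b)⁻¹)))/(2*(Sf q*(m0 q b)⁻¹))
      = al*b - (al*b)*(m0 q b)⁻¹ := by
    rw [div_eq_iff hPi]; ring
  rw [hdiv]; ring

lemma cen_cover_lt (hb : |b| ≤ 1/7) (r : ℝ) (h0 : 0 ≤ r) (h1 : r < Sf q) :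
    dist (pt (r*Real.cos q) (r*Real.sin q)) (cen q b) < 1 := by
  have hq : Real.cos q ^2 + Real.sin q ^2 = 1 := by
    rw [add_comm]; exact Real.sin_sq_add_cos_sq q
  have hm2 := hm2_lemma q b
  have him : (m0 q b)⁻¹ * m0 q b = 1 := inv_mul_cancel₀ (m0_pos q b).ne'
  have hi0 : 0 ≤ (m0 q b)⁻¹ := inv_nonneg.2 (m0_pos q b).le
  have hub := m0_ub (q := q) hb
  have hd2 : dist (pt (r*Real.cos q) (r*Real.sin q)) (cen q b) ^ 2
      = r^2 - 2*r*(Sf q - Sf q*(m0 q b)⁻¹) + ((Sf q)^2 - 2*(m0 q b)⁻¹*(Sf q)^2 + 1) := by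
    rw [dist_sq', pt0, pt1, cen_apply0, cen_apply1]
    linear_combination (r^2 - 2*r*(Sf q - Sf q*(m0 q b)⁻¹) + (Sf q)^2 - 2*(m0 q b)⁻¹*(Sf q)^2
      + ((m0 q b)⁻¹)^2*((Sf q)^2+(al*b)^2)) * hq + hm2
  have hfac : dist (pt (r*Real.cos q) (r*Real.sin q)) (cen q b) ^ 2 - 1
      = (r - Sf q) * (r - (Sf q - 2*Sf q*(m0 q b)⁻¹)) := by
    rw [hd2]; ring
  have hsecond : 0 < r - (Sf q - 2*Sf q*(m0 q b)⁻¹) := by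
    have h2i : 1 < 2*(m0 q b)⁻¹ := by
      nlinarith [him, Sf_ub q, Sf_lb q]
    nlinarith [Sf_pos q]
  have hprod : (r - Sf q) * (r - (Sf q - 2*Sf q*(m0 q b)⁻¹)) < 0 :=
    mul_neg_of_neg_of_pos (by linarith) hsecond
  nlinarith [dist_nonneg (x := pt (r*Real.cos q) (r*Real.sin q)) (y := cen q b), hfac, hprod]

end core

/-! ### topology -/

def RB : Set Pl := ES + Metric.closedBall (0:Pl) 1

lemma mem_RB {x : Pl} : x ∈ RB ↔ ∃ c ∈ ES, dist x c ≤ 1 := by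
  constructor
  · rintro ⟨c, hc, y, hy, rfl⟩
    exact ⟨c, hc, by simpa [dist_eq_norm] using mem_closedBall_zero_iff.1 hy⟩
  · rintro ⟨c, hc, h⟩
    exact ⟨c, hc, x - c, by simpa [dist_eq_norm'] using h, by
      show c + (x - c) = x
      rw [add_comm, sub_add_cancel]⟩

lemma ES_closed : IsClosed ES := by
  have : ES = {c : Pl | ‖c‖ ≤ 1/2} ∩ ⋂ θ : ℝ, {c : Pl | 1 ≤ dist (Xp θ) c} := by
    ext c; simp [ES, Set.mem_iInter]
  rw [this]
  refine IsClosed.inter (isClosed_le continuous_norm continuous_const) ?_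
  exact isClosed_iInter (fun θ => isClosed_le continuous_const (Continuous.dist continuous_const continuous_id))

lemma ES_compact : IsCompact ES :=
  (isCompact_closedBall (0:Pl) (1/2)).of_isClosed_subset ES_closed
    (fun c hc => mem_closedBall_zero_iff.2 hc.1)

lemma RB_compact : IsCompact RB := ES_compact.add (isCompact_closedBall 0 1)
lemma RB_closed : IsClosed RB := RB_compact.isClosed

lemma epsNbhd_eq : epsNbhd ES 1 = RB := by
  apply Subset.antisymm
  · apply closure_minimal _ RB_closed
    intro y hy
    simp only [Set.mem_iUnion] at hy
    obtain ⟨c, hc, hyc⟩ := hy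
    exact mem_RB.2 ⟨c, hc, (mem_ball.1 hyc).le⟩
  · intro x hx
    obtain ⟨c, hc, hd⟩ := mem_RB.1 hx
    have h1 : Metric.ball c 1 ⊆ ⋃ y ∈ ES, Metric.ball y 1 :=
      subset_biUnion_of_mem (u := fun y => Metric.ball y 1) hc
    have h2 : x ∈ closure (Metric.ball c 1) := by
      rw [closure_ball c one_ne_zero]; exact mem_closedBall.2 hd
    exact closure_mono h1 h2

lemma ball_sub_RB {c : Pl} (hc : c ∈ ES) : Metric.ball c 1 ⊆ RB :=
  fun y hy => mem_RB.2 ⟨c, hc, (mem_ball.1 hy).le⟩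

lemma ball_sub_interior {c : Pl} (hc : c ∈ ES) : Metric.ball c 1 ⊆ interior RB :=
  interior_maximal (ball_sub_RB hc) isOpen_ball

lemma Xp_mem_RB (q : ℝ) : Xp q ∈ RB := by
  obtain ⟨b, hok, hb⟩ := okb_generic q
  exact mem_RB.2 ⟨cen q b, cen_mem hok hb, (cen_touch q b).le⟩

lemma dist_scaled (q t : ℝ) :
    dist (pt (((1+t)*Sf q)*Real.cos q) (((1+t)*Sf q)*Real.sin q)) (Xp q) = |t| * Sf q := by
  have hq : Real.cos q ^2 + Real.sin q ^2 = 1 := by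
    rw [add_comm]; exact Real.sin_sq_add_cos_sq q
  have hd2 : dist (pt (((1+t)*Sf q)*Real.cos q) (((1+t)*Sf q)*Real.sin q)) (Xp q) ^ 2
      = (t * Sf q)^2 := by
    rw [dist_sq', pt0, pt1, Xp_apply0, Xp_apply1]
    linear_combination (t*Sf q)^2 * hq
  have h0 : (0:ℝ) ≤ dist (pt (((1+t)*Sf q)*Real.cos q) (((1+t)*Sf q)*Real.sin q)) (Xp q) := dist_nonneg
  have habs : |t| * Sf q = Real.sqrt ((t * Sf q)^2) := by
    rw [Real.sqrt_sq_eq_abs, abs_mul, abs_of_pos (Sf_pos q)]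
  rw [habs, ← hd2, Real.sqrt_sq h0]

lemma Xp_not_interior (q : ℝ) : Xp q ∉ interior RB := by
  intro h
  obtain ⟨ε, hε, hball⟩ := Metric.isOpen_iff.1 isOpen_interior _ h
  set t := ε / (2 * Sf q) with ht
  have htpos : 0 < t := div_pos hε (by linarith [Sf_pos q])
  set y := pt (((1+t)*Sf q)*Real.cos q) (((1+t)*Sf q)*Real.sin q) with hy
  have hdy : dist y (Xp q) = t * Sf q := by
    rw [hy, dist_scaled, abs_of_pos htpos]
  have hlt : dist y (Xp q) < ε := by
    rw [hdy, ht]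
    rw [div_mul_eq_mul_div]
    rw [div_lt_iff₀ (by linarith [Sf_pos q])]
    nlinarith [Sf_pos q, hε]
  have hyRB : y ∈ RB := interior_subset (hball (mem_ball.2 hlt))
  obtain ⟨c, hc, hdc⟩ := mem_RB.1 hyRB
  have hle : (1+t)*Sf q ≤ fb c q :=
    r_le_fb hc q ((1+t)*Sf q) (by nlinarith [Sf_pos q]) hdc
  have := fb_le_Sf hc q
  nlinarith [Sf_pos q]

lemma pt_zero : pt 0 0 = (0 : Pl) := by
  ext i; fin_cases i <;> simp [pt]

lemma exists_polar {x : Pl} (hx : x ≠ 0) :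
    ∃ θ ∈ Icc 0 (2*π), x = pt (‖x‖ * Real.cos θ) (‖x‖ * Real.sin θ) := by
  set z : ℂ := ⟨x 0, x 1⟩ with hz
  have hzne : z ≠ 0 := by
    intro h
    apply hx
    have h0 : x 0 = 0 := by rw [← Complex.zero_re, ← h]
    have h1 : x 1 = 0 := by rw [← Complex.zero_im, ← h]
    rw [← pt_eta x, h0, h1, pt_zero]
  have hnorm' : ‖x‖ = Real.sqrt ((x 0)^2 + (x 1)^2) := by
    rw [EuclideanSpace.norm_eq]
    simp [Fin.sum_univ_two, sq_abs]
  have habs : ‖z‖ = ‖x‖ := by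
    rw [Complex.norm_def, Complex.normSq_apply, hnorm']
    rw [show z.re * z.re + z.im * z.im = (x 0)^2 + (x 1)^2 from by rw [hz]; ring]
  have hcos : x 0 = ‖x‖ * Real.cos z.arg := by
    have := Complex.cos_arg hzne
    rw [habs] at this
    have hn : ‖x‖ ≠ 0 := by
      simpa using hx
    field_simp at this
    linear_combination -this
  have hsin : x 1 = ‖x‖ * Real.sin z.arg := by
    have := Complex.sin_arg z
    rw [habs] at this
    have hn : ‖x‖ ≠ 0 := by simpa using hx
    field_simp at this
    linear_combination -this
  have harg := Complex.arg_mem_Ioc z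
  by_cases h0 : 0 ≤ z.arg
  · refine ⟨z.arg, ⟨h0, ?_⟩, ?_⟩
    · have := harg.2
      nlinarith [Real.pi_pos]
    · rw [← hcos, ← hsin, pt_eta]
  · refine ⟨z.arg + 2*π, ⟨by nlinarith [harg.1, Real.pi_pos], by nlinarith [harg.2, Real.pi_pos]⟩, ?_⟩
    rw [Real.cos_add_two_pi, Real.sin_add_two_pi, ← hcos, ← hsin, pt_eta]

lemma zero_mem_interior : (0:Pl) ∈ interior RB := by
  obtain ⟨b, hok, hb⟩ := okb_generic 0
  apply ball_sub_interior (cen_mem hok hb)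
  rw [mem_ball, dist_comm, dist_zero_right]
  calc ‖cen 0 b‖ ≤ 1/2 := cen_norm hb
    _ < 1 := by norm_num

lemma frontier_RB : frontier RB = Xp '' Icc 0 (2*π) := by
  rw [RB_closed.frontier_eq]
  ext x
  constructor
  · rintro ⟨hxR, hxI⟩
    by_cases h0 : x = 0
    · exact absurd (h0 ▸ zero_mem_interior) hxI
    obtain ⟨θ, hθmem, hxeq⟩ := exists_polar h0
    obtain ⟨c, hc, hdc⟩ := mem_RB.1 hxR
    have hr_le : ‖x‖ ≤ fb c θ := r_le_fb hc θ ‖x‖ (norm_nonneg x) (hxeq ▸ hdc)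
    have hrS : ‖x‖ ≤ Sf θ := le_trans hr_le (fb_le_Sf hc θ)
    rcases eq_or_lt_of_le hrS with heq | hlt
    · refine ⟨θ, hθmem, ?_⟩
      rw [Xp, ← heq, ← hxeq]
    · exfalso
      apply hxI
      obtain ⟨b, hok, hb⟩ := okb_generic θ
      apply ball_sub_interior (cen_mem hok hb)
      rw [mem_ball]
      rw [hxeq]
      exact cen_cover_lt hb ‖x‖ (norm_nonneg x) hlt
  · rintro ⟨θ, hθ, rfl⟩
    exact ⟨Xp_mem_RB θ, Xp_not_interior θ⟩

/-! ### Lipschitz and final facts -/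

lemma Sf_lipschitz : LipschitzWith 1 Sf := by
  apply LipschitzWith.of_dist_le_mul
  intro x y
  rw [Real.dist_eq, Real.dist_eq]
  have h := T_lip x y
  have heq : |Sf x - Sf y| = al * |T x - T y| := by
    rw [Sf, Sf, show 1 + al * (1 + T x) - (1 + al * (1 + T y)) = al * (T x - T y) from by ring,
      abs_mul, abs_of_pos (show (0:ℝ) < al from by rw [al]; norm_num)]
  rw [heq]
  push_cast
  rw [al]
  nlinarith [abs_nonneg (x - y)]

lemma Sf_endpoints : Sf 0 = Sf (2*π) := by
  have := Sf_per 0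
  rw [zero_add] at this
  exact this.symm

lemma Sf_nondiff (q : ℚ) (hq : (q:ℝ) ∈ Set.Ioc 0 (2*π)) :
    ¬ DifferentiableWithinAt ℝ Sf (Set.Icc 0 (2*π)) (q:ℝ) := by
  intro hdiff
  have hqlt : (q:ℝ) < 2*π := by
    rcases lt_or_eq_of_le hq.2 with h | h
    · exact h
    · exfalso
      apply irrational_pi
      refine ⟨q/2, ?_⟩
      push_cast
      linarith
  have hmem : Set.Icc (0:ℝ) (2*π) ∈ nhds (q:ℝ) := Icc_mem_nhds hq.1 hqlt
  have hdA : DifferentiableAt ℝ Sf (q:ℝ) := hdiff.differentiableAt hmem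
  have haam : aa (idx q) = (q:ℝ) := aa_idx q
  have key : ∀ τ : ℝ, |τ| ≤ 1 → deriv Sf (q:ℝ) = al * brat (idx q) τ := by
    intro τ hτ
    obtain ⟨hok, hb⟩ := okb_brat (idx q) τ hτ
    rw [haam] at hok
    have hf_le : ∀ θ, fb (cen (q:ℝ) (brat (idx q) τ)) θ ≤ Sf θ := fb_le_Sf (cen_mem hok hb)
    have hf_q : fb (cen (q:ℝ) (brat (idx q) τ)) (q:ℝ) = Sf (q:ℝ) := fb_cen_q _ _
    have hfd : HasDerivAt (fb (cen (q:ℝ) (brat (idx q) τ))) (al * brat (idx q) τ) (q:ℝ) :=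
      fb_cen_deriv _ _
    have hmin : IsLocalMin (fun θ => Sf θ - fb (cen (q:ℝ) (brat (idx q) τ)) θ) (q:ℝ) := by
      apply Filter.Eventually.of_forall
      intro x
      simp only
      rw [hf_q]
      linarith [hf_le x]
    have hd0 : deriv (fun θ => Sf θ - fb (cen (q:ℝ) (brat (idx q) τ)) θ) (q:ℝ) = 0 :=
      hmin.deriv_eq_zero
    have hds : deriv (fun θ => Sf θ - fb (cen (q:ℝ) (brat (idx q) τ)) θ) (q:ℝ)
        = deriv Sf (q:ℝ) - al * brat (idx q) τ := by
      rw [deriv_fun_sub hdA hfd.differentiableAt, hfd.deriv]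
    rw [hds] at hd0
    linarith
  have h1 := key 1 (by norm_num)
  have h2 := key (-1) (by norm_num)
  have hbe : brat (idx q) 1 = brat (idx q) (-1) := by
    have h3 : al * brat (idx q) 1 = al * brat (idx q) (-1) := by rw [← h1, ← h2]
    have hal : al ≠ 0 := by rw [al]; norm_num
    exact mul_left_cancel₀ hal h3
  have hsub := brat_sub (idx q)
  have hlp := lam_pos (idx q)
  rw [hbe] at hsub
  linarith

lemma frontier_epsNbhd : frontier (epsNbhd ES 1) = Xp '' Icc 0 (2*π) := by
  rw [epsNbhd_eq, frontier_RB]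

end ND

/-- There exist a compact set `E ⊆ ℝ²`, `ε > 0` and a positive Lipschitz function
`S : [0, 2π] → ℝ` with `S 0 = S (2π)`, such that `∂E_ε` is the polar graph of `S` and `S`
is not differentiable at any rational in `(0, 2π]`. -/
theorem exists_boundary_polar_graph_nondifferentiable_at_rationals :
    ∃ (E : Set (EuclideanSpace ℝ (Fin 2))) (ε : ℝ) (S : ℝ → ℝ) (K : ℝ≥0),
      IsCompact E ∧ 0 < ε ∧
      LipschitzOnWith K S (Set.Icc 0 (2 * Real.pi)) ∧
      (∀ x ∈ Set.Icc 0 (2 * Real.pi), 0 < S x) ∧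
      S 0 = S (2 * Real.pi) ∧
      frontier (epsNbhd E ε) =
        (fun θ : ℝ => pt (S θ * Real.cos θ) (S θ * Real.sin θ)) '' Set.Icc 0 (2 * Real.pi) ∧
      ∀ q : ℚ, (q : ℝ) ∈ Set.Ioc 0 (2 * Real.pi) →
        ¬ DifferentiableWithinAt ℝ S (Set.Icc 0 (2 * Real.pi)) (q : ℝ) := by
  refine ⟨ND.ES, 1, ND.Sf, 1, ND.ES_compact, one_pos,
    (ND.Sf_lipschitz).lipschitzOnWith (s := Set.Icc 0 (2*Real.pi)), fun x _ => ND.Sf_pos x, ND.Sf_endpoints, ?_,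
    fun q hq => ND.Sf_nondiff q hq⟩
  exact ND.frontier_epsNbhd
end
end

section
/- Let q : ℕ → ℚ ∩ [0, 2π] be a bijective enumeration of the rationals in [0, 2π], let (m_n) be a sequence of positive reals with Σ_{n} m_n < ∞, let f(x) := Σ_{n : q_n ≤ x} m_n and I(x) := ∫₀ˣ f(t) dt for x ∈ [0, 2π]. Then I is convex on [0, 2π]; I is differentiable at every irrational x ∈ (0, 2π) with I'(x) = f(x); and at every rational q_n ∈ (0, 2π) the one-sided derivatives of I exist and the right derivative exceeds the left derivative by m_n > 0, so I is not differentiable at any rational in (0, 2π). -/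
open Set Metric Filter
open scoped ENNReal NNReal Topology

noncomputable section

/-- **The integral of the jump function.**
With `f` the jump function of a bijective enumeration `q` of the rationals in `[0, 2π]`
with positive summable jumps `(m n)`, the integral function `I x = ∫_0^x f` is convex on
`[0, 2π]`, differentiable with derivative `f x` at every irrational `x ∈ (0, 2π)`, and at
every rational `q n ∈ (0, 2π)` both one-sided derivatives exist with the right derivative
exceeding the left one by `m n > 0`, so `I` is not differentiable there. -/
theorem integral_of_jump_function_properties
    (q : ℕ → ℚ) (hq : Function.Injective q)
    (hrange : Set.range q = {r : ℚ | (r : ℝ) ∈ Set.Icc 0 (2 * Real.pi)})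
    (m : ℕ → ℝ) (hm : ∀ n, 0 < m n) (hsum : Summable m)
    (f I : ℝ → ℝ)
    (hf : ∀ x : ℝ, f x = ∑' n : ℕ, if (q n : ℝ) ≤ x then m n else 0)
    (hI : ∀ x : ℝ, I x = ∫ t in (0:ℝ)..x, f t) :
    ConvexOn ℝ (Set.Icc 0 (2 * Real.pi)) I ∧
    (∀ x ∈ Set.Ioo (0:ℝ) (2 * Real.pi), Irrational x → HasDerivAt I (f x) x) ∧
    (∀ n : ℕ, (q n : ℝ) ∈ Set.Ioo 0 (2 * Real.pi) →
      ∃ dl dr : ℝ,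
        HasDerivWithinAt I dl (Set.Iic (q n : ℝ)) (q n : ℝ) ∧
        HasDerivWithinAt I dr (Set.Ici (q n : ℝ)) (q n : ℝ) ∧
        dr - dl = m n ∧
        ¬ DifferentiableAt ℝ I (q n : ℝ)) := by
  -- the summands of `f` and the left-limit function `g`
  set M : ℕ → ℝ → ℝ := fun n x => if (q n : ℝ) ≤ x then m n else 0 with hMdef
  set N : ℕ → ℝ → ℝ := fun n x => if (q n : ℝ) < x then m n else 0 with hNdef
  set g : ℝ → ℝ := fun x => ∑' n : ℕ, N n x with hgdef
  have hM0 : ∀ n x, 0 ≤ M n x := fun n x => by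
    by_cases h : (q n : ℝ) ≤ x <;> simp [hMdef, h, (hm n).le]
  have hMle : ∀ n x, M n x ≤ m n := fun n x => by
    by_cases h : (q n : ℝ) ≤ x <;> simp [hMdef, h, (hm n).le]
  have hN0 : ∀ n x, 0 ≤ N n x := fun n x => by
    by_cases h : (q n : ℝ) < x <;> simp [hNdef, h, (hm n).le]
  have hNle : ∀ n x, N n x ≤ m n := fun n x => by
    by_cases h : (q n : ℝ) < x <;> simp [hNdef, h, (hm n).le]
  have hMsum : ∀ x, Summable fun n => M n x := fun x =>
    hsum.of_nonneg_of_le (fun n => hM0 n x) fun n => hMle n x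
  have hNsum : ∀ x, Summable fun n => N n x := fun x =>
    hsum.of_nonneg_of_le (fun n => hN0 n x) fun n => hNle n x
  have hfM : ∀ x, f x = ∑' n : ℕ, M n x := hf
  -- monotonicity of `f`
  have hf_mono : Monotone f := by
    intro x y hxy
    rw [hfM x, hfM y]
    refine Summable.tsum_le_tsum (fun n => ?_) (hMsum x) (hMsum y)
    by_cases h : (q n : ℝ) ≤ x
    · simp [hMdef, h, h.trans hxy]
    · simp only [hMdef]
      split_ifs with h' <;> simp [hM0, (hm n).le]
  have hf_meas : Measurable f := hf_mono.measurable
  have hf_int : ∀ a b : ℝ, IntervalIntegrable f MeasureTheory.volume a b := fun a b =>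
    hf_mono.intervalIntegrable
  -- tail estimate
  have tail_bound : ∀ ε : ℝ, 0 < ε → ∃ s : Finset ℕ,
      ∑' n : {n : ℕ // n ∉ s}, m n < ε := by
    intro ε hε
    exact ((tendsto_order.1 (tendsto_tsum_compl_atTop_zero m)).2 ε hε).exists
  -- right continuity of `f`
  have h_right : ∀ x : ℝ, Tendsto f (𝓝[≥] x) (𝓝 (f x)) := by
    intro x
    rw [Metric.tendsto_nhdsWithin_nhds]
    intro ε hε
    obtain ⟨s, hs⟩ := tail_bound ε hε
    obtain ⟨δ, hδ0, hδ⟩ : ∃ δ : ℝ, 0 < δ ∧ ∀ n ∈ s, (q n : ℝ) ≤ x ∨ x + δ ≤ (q n : ℝ) := by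
      by_cases hF : (s.filter fun n => x < (q n : ℝ)).Nonempty
      · refine ⟨(s.filter fun n => x < (q n : ℝ)).inf' hF fun n => (q n : ℝ) - x, ?_, ?_⟩
        · rw [Finset.lt_inf'_iff]
          intro n hn
          have := (Finset.mem_filter.1 hn).2
          linarith
        · intro n hn
          by_cases hx : (q n : ℝ) ≤ x
          · exact Or.inl hx
          · refine Or.inr ?_
            have hmem : n ∈ s.filter fun n => x < (q n : ℝ) :=
              Finset.mem_filter.2 ⟨hn, lt_of_not_ge hx⟩
            have := Finset.inf'_le (fun n => (q n : ℝ) - x) hmem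
            linarith
      · exact ⟨1, one_pos, fun n hn => Or.inl (by
          by_contra h
          exact hF ⟨n, Finset.mem_filter.2 ⟨hn, lt_of_not_ge h⟩⟩)⟩
    refine ⟨δ, hδ0, fun {y} hy hyd => ?_⟩
    have hyx : x ≤ y := hy
    have hyd' : y < x + δ := by
      rw [Real.dist_eq, abs_lt] at hyd
      linarith [hyd.2]
    have hcongr : ∀ n ∈ s, M n y = M n x := by
      intro n hn
      rcases hδ n hn with h | h
      · simp [hMdef, h, h.trans hyx]
      · have h1 : ¬(q n : ℝ) ≤ x := by linarith
        have h2 : ¬(q n : ℝ) ≤ y := by linarith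
        simp [hMdef, h1, h2]
    have e1 := Summable.sum_add_tsum_subtype_compl (hMsum x) s
    have e2 := Summable.sum_add_tsum_subtype_compl (hMsum y) s
    have hsx : ∑ n ∈ s, M n y = ∑ n ∈ s, M n x := Finset.sum_congr rfl hcongr
    have hty : ∑' n : {n : ℕ // n ∉ s}, M n y ≤ ∑' n : {n : ℕ // n ∉ s}, m n :=
      Summable.tsum_le_tsum (fun n => hMle _ _) ((hMsum y).subtype _) (hsum.subtype _)
    have htx : ∑' n : {n : ℕ // n ∉ s}, M n x ≤ ∑' n : {n : ℕ // n ∉ s}, m n :=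
      Summable.tsum_le_tsum (fun n => hMle _ _) ((hMsum x).subtype _) (hsum.subtype _)
    have hty0 : 0 ≤ ∑' n : {n : ℕ // n ∉ s}, M n y := tsum_nonneg fun n => hM0 _ _
    have htx0 : 0 ≤ ∑' n : {n : ℕ // n ∉ s}, M n x := tsum_nonneg fun n => hM0 _ _
    rw [Real.dist_eq, hfM y, hfM x, abs_lt]
    constructor <;> [nlinarith; nlinarith]
  -- `f` tends to `g x` from the left
  have h_left : ∀ x : ℝ, Tendsto f (𝓝[<] x) (𝓝 (g x)) := by
    intro x
    rw [Metric.tendsto_nhdsWithin_nhds]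
    intro ε hε
    obtain ⟨s, hs⟩ := tail_bound ε hε
    obtain ⟨δ, hδ0, hδ⟩ : ∃ δ : ℝ, 0 < δ ∧ ∀ n ∈ s, (q n : ℝ) < x → (q n : ℝ) ≤ x - δ := by
      by_cases hF : (s.filter fun n => (q n : ℝ) < x).Nonempty
      · refine ⟨(s.filter fun n => (q n : ℝ) < x).inf' hF fun n => x - (q n : ℝ), ?_, ?_⟩
        · rw [Finset.lt_inf'_iff]
          intro n hn
          have := (Finset.mem_filter.1 hn).2
          linarith
        · intro n hn hlt
          have hmem : n ∈ s.filter fun n => (q n : ℝ) < x :=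
            Finset.mem_filter.2 ⟨hn, hlt⟩
          have := Finset.inf'_le (fun n => x - (q n : ℝ)) hmem
          linarith
      · exact ⟨1, one_pos, fun n hn hlt =>
          absurd ⟨n, Finset.mem_filter.2 ⟨hn, hlt⟩⟩ hF⟩
    refine ⟨δ, hδ0, fun {y} hy hyd => ?_⟩
    have hyx : y < x := hy
    have hyd' : x - δ < y := by
      rw [Real.dist_eq, abs_lt] at hyd
      linarith [hyd.1]
    have hcongr : ∀ n ∈ s, M n y = N n x := by
      intro n hn
      by_cases h : (q n : ℝ) < x
      · have h1 : (q n : ℝ) ≤ y := le_of_lt (lt_of_le_of_lt (hδ n hn h) hyd')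
        simp [hMdef, hNdef, h, h1]
      · have h1 : ¬(q n : ℝ) ≤ y := fun hc => h (lt_of_le_of_lt hc hyx)
        simp [hMdef, hNdef, h, h1]
    have e1 := Summable.sum_add_tsum_subtype_compl (hNsum x) s
    have e2 := Summable.sum_add_tsum_subtype_compl (hMsum y) s
    have hsx : ∑ n ∈ s, M n y = ∑ n ∈ s, N n x := Finset.sum_congr rfl hcongr
    have hty : ∑' n : {n : ℕ // n ∉ s}, M n y ≤ ∑' n : {n : ℕ // n ∉ s}, m n :=
      Summable.tsum_le_tsum (fun n => hMle _ _) ((hMsum y).subtype _) (hsum.subtype _)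
    have htx : ∑' n : {n : ℕ // n ∉ s}, N n x ≤ ∑' n : {n : ℕ // n ∉ s}, m n :=
      Summable.tsum_le_tsum (fun n => hNle _ _) ((hNsum x).subtype _) (hsum.subtype _)
    have hty0 : 0 ≤ ∑' n : {n : ℕ // n ∉ s}, M n y := tsum_nonneg fun n => hM0 _ _
    have htx0 : 0 ≤ ∑' n : {n : ℕ // n ∉ s}, N n x := tsum_nonneg fun n => hN0 _ _
    rw [Real.dist_eq, hfM y, hgdef, abs_lt]
    constructor <;> [nlinarith; nlinarith]
  -- the jump identity: `f (q k) = g (q k) + m k`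
  have h_jump : ∀ k : ℕ, f (q k : ℝ) - g (q k : ℝ) = m k := by
    intro k
    rw [hfM, hgdef]
    rw [← Summable.tsum_sub (hMsum _) (hNsum _)]
    have : ∀ n : ℕ, M n (q k : ℝ) - N n (q k : ℝ) = if n = k then m n else 0 := by
      intro n
      by_cases hnk : n = k
      · subst hnk
        simp [hMdef, hNdef]
      · have hne : (q n : ℝ) ≠ (q k : ℝ) := by
          exact_mod_cast fun hc => hnk (hq (by exact_mod_cast hc))
        by_cases h : (q n : ℝ) < (q k : ℝ)
        · simp [hMdef, hNdef, h, h.le, hnk]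
        · have h' : ¬(q n : ℝ) ≤ (q k : ℝ) := fun hc => h (lt_of_le_of_ne hc hne)
          simp [hMdef, hNdef, h, h', hnk]
    rw [tsum_congr this, tsum_eq_single k (fun n hn => by simp [hn])]
    simp
  -- `f = g` at irrational points
  have h_irr_eq : ∀ x : ℝ, Irrational x → g x = f x := by
    intro x hx
    rw [hfM, hgdef]
    refine tsum_congr fun n => ?_
    have hne : (q n : ℝ) ≠ x := fun hc => hx ⟨q n, hc⟩
    by_cases h : (q n : ℝ) < x
    · simp [hMdef, hNdef, h, h.le]
    · have h' : ¬(q n : ℝ) ≤ x := fun hc => h (lt_of_le_of_ne hc hne)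
      simp [hMdef, hNdef, h, h']
  -- `I` is the integral function
  have hIfun : I = fun u => ∫ t in (0:ℝ)..u, f t := funext hI
  -- measurability at filters
  have hmeasAt : ∀ l : Filter ℝ, StronglyMeasurableAtFilter f l MeasureTheory.volume :=
    fun l => hf_meas.aestronglyMeasurable.stronglyMeasurableAtFilter
  -- Part 1: convexity
  have hconv : ConvexOn ℝ (Set.Icc 0 (2 * Real.pi)) I := by
    refine convexOn_of_slope_mono_adjacent (convex_Icc _ _) fun {x y z} hx hz hxy hyz => ?_
    have h1 : I y - I x = ∫ t in x..y, f t := by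
      rw [hI x, hI y,
        ← intervalIntegral.integral_add_adjacent_intervals (hf_int 0 x) (hf_int x y)]
      ring
    have h2 : I z - I y = ∫ t in y..z, f t := by
      rw [hI y, hI z,
        ← intervalIntegral.integral_add_adjacent_intervals (hf_int 0 y) (hf_int y z)]
      ring
    have hub : ∫ t in x..y, f t ≤ (y - x) * f y := by
      calc ∫ t in x..y, f t ≤ ∫ _t in x..y, f y :=
            intervalIntegral.integral_mono_on hxy.le (hf_int x y) intervalIntegrable_const
              fun t ht => hf_mono ht.2
        _ = (y - x) * f y := by simp [smul_eq_mul]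
    have hlb : (z - y) * f y ≤ ∫ t in y..z, f t := by
      calc (z - y) * f y = ∫ _t in y..z, f y := by simp [smul_eq_mul]
        _ ≤ ∫ t in y..z, f t :=
            intervalIntegral.integral_mono_on hyz.le intervalIntegrable_const (hf_int y z)
              fun t ht => hf_mono ht.1
    have hA : (I y - I x) / (y - x) ≤ f y := by
      rw [div_le_iff₀ (by linarith)]
      rw [h1]; linarith
    have hB : f y ≤ (I z - I y) / (z - y) := by
      rw [le_div_iff₀ (by linarith)]
      rw [h2]; linarith
    linarith
  refine ⟨hconv, ?_, ?_⟩
  -- Part 2: derivative at irrationals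
  · intro x _hx hirr
    have hcont : ContinuousAt f x := by
      rw [ContinuousAt, ← nhdsLT_sup_nhdsGE x, tendsto_sup]
      exact ⟨by rw [← h_irr_eq x hirr]; exact h_left x, h_right x⟩
    have := intervalIntegral.integral_hasDerivAt_right (hf_int 0 x)
      (hmeasAt (nhds x)) hcont
    rw [hIfun]
    exact this
  -- Part 3: one-sided derivatives at rationals
  · intro n hn
    set b : ℝ := (q n : ℝ) with hb
    refine ⟨g b, f b, ?_, ?_, by have := h_jump n; linarith, ?_⟩
    -- left derivative
    · have hle : 𝓝[≤] b ⊓ MeasureTheory.ae MeasureTheory.volume ≤ 𝓝[<] b := by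
        have : Set.Iio b = Set.Iic b ∩ {b}ᶜ := by
          ext t
          simp only [Set.mem_Iio, Set.mem_inter_iff, Set.mem_Iic, Set.mem_compl_iff,
            Set.mem_singleton_iff]
          constructor
          · exact fun h => ⟨h.le, ne_of_lt h⟩
          · exact fun h => lt_of_le_of_ne h.1 h.2
        rw [this, nhdsWithin_inter']
        refine inf_le_inf_left _ (le_principal_iff.2 (MeasureTheory.mem_ae_iff.2 ?_))
        simp
      have htd : Tendsto f (𝓝[≤] b ⊓ MeasureTheory.ae MeasureTheory.volume) (𝓝 (g b)) :=
        (h_left b).mono_left hle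
      have := intervalIntegral.integral_hasDerivWithinAt_of_tendsto_ae_right
        (hf_int 0 b) (s := Set.Iic b) (t := Set.Iic b) (hmeasAt _) htd
      rw [hIfun]
      exact this
    -- right derivative
    · have htd : ContinuousWithinAt f (Set.Ioi b) b :=
        (h_right b).mono_left (nhdsWithin_mono b Set.Ioi_subset_Ici_self)
      have := intervalIntegral.integral_hasDerivWithinAt_right
        (hf_int 0 b) (s := Set.Ici b) (t := Set.Ioi b) (hmeasAt _) htd
      rw [hIfun]
      exact this
    -- non-differentiability
    · intro hdiff
      have hd := hdiff.hasDerivAt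
      have hdl : HasDerivWithinAt I (g b) (Set.Iic b) b := by
        have hle : 𝓝[≤] b ⊓ MeasureTheory.ae MeasureTheory.volume ≤ 𝓝[<] b := by
          have : Set.Iio b = Set.Iic b ∩ {b}ᶜ := by
            ext t
            simp only [Set.mem_Iio, Set.mem_inter_iff, Set.mem_Iic, Set.mem_compl_iff,
              Set.mem_singleton_iff]
            constructor
            · exact fun h => ⟨h.le, ne_of_lt h⟩
            · exact fun h => lt_of_le_of_ne h.1 h.2
          rw [this, nhdsWithin_inter']
          refine inf_le_inf_left _ (le_principal_iff.2 (MeasureTheory.mem_ae_iff.2 ?_))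
          simp
        have htd : Tendsto f (𝓝[≤] b ⊓ MeasureTheory.ae MeasureTheory.volume) (𝓝 (g b)) :=
          (h_left b).mono_left hle
        have := intervalIntegral.integral_hasDerivWithinAt_of_tendsto_ae_right
          (hf_int 0 b) (s := Set.Iic b) (t := Set.Iic b) (hmeasAt _) htd
        rw [hIfun]
        exact this
      have hdr : HasDerivWithinAt I (f b) (Set.Ici b) b := by
        have htd : ContinuousWithinAt f (Set.Ioi b) b :=
          (h_right b).mono_left (nhdsWithin_mono b Set.Ioi_subset_Ici_self)
        have := intervalIntegral.integral_hasDerivWithinAt_right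
          (hf_int 0 b) (s := Set.Ici b) (t := Set.Ioi b) (hmeasAt _) htd
        rw [hIfun]
        exact this
      have hudl : UniqueDiffWithinAt ℝ (Set.Iic b) b := uniqueDiffOn_Iic b b Set.self_mem_Iic
      have hudr : UniqueDiffWithinAt ℝ (Set.Ici b) b := uniqueDiffOn_Ici b b Set.self_mem_Ici
      have e1 : g b = deriv I b := by
        rw [← hdl.derivWithin hudl, ← (hd.hasDerivWithinAt (s := Set.Iic b)).derivWithin hudl]
      have e2 : f b = deriv I b := by
        rw [← hdr.derivWithin hudr, ← (hd.hasDerivWithinAt (s := Set.Ici b)).derivWithin hudr]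
      have := h_jump n
      rw [← hb] at this
      rw [e1, e2] at this
      simp at this
      linarith [hm n]
end
end

section
/- If f : ℝ → ℝ is locally Lipschitz and semiconvex, then its closed epigraph epi f := {(x, y) ∈ ℝ² : y ≥ f(x)} has positive reach: reach(epi f) > 0. -/
open Set Metric Filter
open scoped ENNReal NNReal

noncomputable section
set_option maxHeartbeats 1000000

lemma mid_sq_lt (d a x₁ x₂ s₁ s₂ : ℝ)
    (hs1sq : s₁^2 = d^2 - (x₁ - a)^2) (hs2sq : s₂^2 = d^2 - (x₂ - a)^2)
    (hxx : x₁ ≠ x₂) : ((x₁ + x₂)/2 - a)^2 < d^2 := by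
  have h1 : (x₁ - a)^2 ≤ d^2 := by nlinarith [sq_nonneg s₁]
  have h2 : (x₂ - a)^2 ≤ d^2 := by nlinarith [sq_nonneg s₂]
  have hne : 0 < (x₁ - x₂)^2 := by
    have := sub_ne_zero_of_ne hxx; positivity
  have hexp : ((x₁ + x₂)/2 - a)^2
      = (x₁ - a)^2/2 + (x₂ - a)^2/2 - (x₁ - x₂)^2/4 := by ring
  linarith

lemma circle_alg (C d a x₁ x₂ s₁ s₂ β : ℝ) (hC : 0 < C) (hdpos : 0 < d) (hCd : C * d < 1)
    (hs1sq : s₁^2 = d^2 - (x₁ - a)^2) (hs2sq : s₂^2 = d^2 - (x₂ - a)^2)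
    (hs1nn : 0 ≤ s₁) (hs2nn : 0 ≤ s₂)
    (hβsq : β^2 = d^2 - ((x₁ + x₂)/2 - a)^2) (hβnn : 0 ≤ β)
    (hchain : β + C/2 * ((x₁ + x₂)/2)^2 ≤ (s₁ + C/2 * x₁^2)/2 + (s₂ + C/2 * x₂^2)/2)
    (hxx : x₁ ≠ x₂) : False := by
  set δ := (x₁ - x₂)/2 with hδ
  have hδpos : 0 < δ^2 := by
    have : x₁ - x₂ ≠ 0 := sub_ne_zero_of_ne hxx
    positivity
  have hs1d : s₁ ≤ d := by nlinarith [sq_nonneg (x₁ - a)]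
  have hs2d : s₂ ≤ d := by nlinarith [sq_nonneg (x₂ - a)]
  have e1 : ((s₁ + s₂)/2)^2 = β^2 - δ^2 - ((s₁ - s₂)/2)^2 := by
    rw [hδ]; nlinarith
  have e2 : (s₁ + s₂)/2 ≤ β := by
    nlinarith [sq_nonneg ((s₁ - s₂)/2), sq_nonneg (β + (s₁ + s₂)/2)]
  have hβd : β ≤ d := by nlinarith [sq_nonneg ((x₁ + x₂)/2 - a)]
  have e3 : δ^2 ≤ 2*d*(β - (s₁ + s₂)/2) := by
    nlinarith [mul_nonneg (show (0:ℝ) ≤ 2*d - (β + (s₁ + s₂)/2) by linarith)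
      (sub_nonneg.mpr e2), sq_nonneg ((s₁ - s₂)/2)]
  have e4 : β - (s₁ + s₂)/2 ≤ C/2 * δ^2 := by
    have hid : (C/2 * x₁^2)/2 + (C/2 * x₂^2)/2 - C/2*((x₁ + x₂)/2)^2 = C/2*δ^2 := by
      rw [hδ]; ring
    linarith
  have h5 : δ^2 ≤ 2*d*(C/2*δ^2) :=
    le_trans e3 (mul_le_mul_of_nonneg_left e4 (by linarith))
  have h6 : 2*d*(C/2*δ^2) = (C*d)*δ^2 := by ring
  have h7 : (C*d)*δ^2 < 1*δ^2 := mul_lt_mul_of_pos_right hCd hδpos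
  rw [h6] at h5
  rw [one_mul] at h7
  linarith

lemma pt_zero (a b : ℝ) : pt a b 0 = a := rfl
lemma pt_one (a b : ℝ) : pt a b 1 = b := rfl

lemma dist_sq (v w : EuclideanSpace ℝ (Fin 2)) :
    dist v w ^ 2 = (v 0 - w 0)^2 + (v 1 - w 1)^2 := by
  rw [EuclideanSpace.dist_eq, Fin.sum_univ_two, Real.sq_sqrt (by positivity)]
  simp [Real.dist_eq, sq_abs]

lemma unique_nearest (f : ℝ → ℝ) (hfc : Continuous f) (C : ℝ) (hC : 0 < C)
    (hconv : ConvexOn ℝ Set.univ (fun x => f x + C / 2 * x ^ 2))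
    (z : EuclideanSpace ℝ (Fin 2))
    (hz : infDist z {v : EuclideanSpace ℝ (Fin 2) | f (v 0) ≤ v 1} < 1 / C) :
    ∃! y, y ∈ closure {v : EuclideanSpace ℝ (Fin 2) | f (v 0) ≤ v 1} ∧
      dist z y = infDist z {v : EuclideanSpace ℝ (Fin 2) | f (v 0) ≤ v 1} := by
  set E := {v : EuclideanSpace ℝ (Fin 2) | f (v 0) ≤ v 1} with hE
  have hEc : IsClosed E := isClosed_le (hfc.comp (PiLp.continuous_apply 2 _ 0)) (PiLp.continuous_apply 2 _ 1)
  have hEne : E.Nonempty := ⟨pt 0 (f 0), by simp [hE, pt_zero, pt_one]⟩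
  rw [hEc.closure_eq]
  set d := infDist z E with hd
  have hd0 : 0 ≤ d := infDist_nonneg
  by_cases hzE : z ∈ E
  · refine ⟨z, ⟨hzE, by simp [hd, infDist_zero_of_mem hzE]⟩, ?_⟩
    intro y hy
    have : dist z y = 0 := by rw [hy.2, hd, infDist_zero_of_mem hzE]
    exact (dist_eq_zero.mp this).symm
  · -- z outside
    set a := z 0 with ha
    set b := z 1 with hb
    have hba : b < f a := not_le.mp hzE
    have hdpos : 0 < d := by
      rcases lt_or_eq_of_le hd0 with h | h
      · exact h
      · exact absurd ((hEc.mem_iff_infDist_zero hEne).mpr h.symm) hzE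
    have hCd : C * d < 1 := by
      rw [lt_div_iff₀ hC] at hz; linarith
    -- lower bound for all members
    have hlow : ∀ w ∈ E, d ^ 2 ≤ (a - w 0)^2 + (b - w 1)^2 := by
      intro w hw
      have h1 : d ≤ dist z w := infDist_le_dist_of_mem hw
      have h2 : d ^ 2 ≤ dist z w ^ 2 := pow_le_pow_left₀ hd0 h1 2
      rwa [dist_sq] at h2
    -- structure of nearest points
    have hstruct : ∀ y, y ∈ E → dist z y = d →
        y 1 = f (y 0) ∧ b ≤ y 1 ∧ (a - y 0)^2 + (b - y 1)^2 = d^2 := by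
      intro y hyE hyd
      set x := y 0 with hx
      set s := y 1 with hs
      have hfx : f x ≤ s := hyE
      have hcirc : (a - x)^2 + (b - s)^2 = d^2 := by
        rw [← dist_sq z y, hyd]
      have hbs : b ≤ s := by
        by_contra h
        push_neg at h
        have hmem : pt x b ∈ E := by simpa [hE, pt_zero, pt_one] using le_of_lt (lt_of_le_of_lt hfx h)
        have := hlow _ hmem
        rw [pt_zero, pt_one] at this
        nlinarith [sq_nonneg (b - s)]
      have hsfx : s = f x := by
        by_contra h
        have hfxs : f x < s := lt_of_le_of_ne hfx (Ne.symm h)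
        by_cases hbfx : b ≤ f x
        · -- competitor (x, f x)
          have hmem : pt x (f x) ∈ E := by simp [hE, pt_zero, pt_one]
          have := hlow _ hmem
          rw [pt_zero, pt_one] at this
          nlinarith
        · push_neg at hbfx
          -- f x < b
          by_cases hsb : s = b
          · -- y = (x, b), interior-ish; use IVT
            have hxa : x ≠ a := by
              intro hxa; rw [hxa] at hbfx; linarith
            have hdx : (a - x)^2 = d^2 := by rw [hsb] at hcirc; nlinarith
            have hIVT : ∃ c, f c ≤ b ∧ (a - c)^2 < (a - x)^2 := by
              rcases lt_or_gt_of_ne hxa with hlt | hgt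
              · -- x < a
                have : b ∈ Ioo (f x) (f a) := ⟨hbfx, hba⟩
                have hsub := intermediate_value_Ioo (le_of_lt hlt) hfc.continuousOn
                obtain ⟨c, hc, hfc'⟩ := hsub this
                exact ⟨c, le_of_eq hfc', by nlinarith [hc.1, hc.2]⟩
              · -- a < x
                have : b ∈ Ioo (f x) (f a) := ⟨hbfx, hba⟩
                have hsub := intermediate_value_Ioo' (le_of_lt hgt) hfc.continuousOn
                obtain ⟨c, hc, hfc'⟩ := hsub this
                exact ⟨c, le_of_eq hfc', by nlinarith [hc.1, hc.2]⟩
            obtain ⟨c, hfcb, hclt⟩ := hIVT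
            have hmem : pt c b ∈ E := by simpa [hE, pt_zero, pt_one] using hfcb
            have := hlow _ hmem
            rw [pt_zero, pt_one] at this
            nlinarith
          · -- f x < b, s > b
            have hsb' : b < s := lt_of_le_of_ne hbs (Ne.symm hsb)
            have hmem : pt x b ∈ E := by simpa [hE, pt_zero, pt_one] using le_of_lt hbfx
            have := hlow _ hmem
            rw [pt_zero, pt_one] at this
            nlinarith [sq_nonneg (b - s)]
      exact ⟨hsfx.symm ▸ rfl, hbs, hcirc⟩
    -- existence
    obtain ⟨y₀, hy₀E, hy₀d⟩ := hEc.exists_infDist_eq_dist hEne z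
    -- uniqueness of pairs
    have huniq : ∀ y₁, y₁ ∈ E → dist z y₁ = d → ∀ y₂, y₂ ∈ E → dist z y₂ = d → y₁ = y₂ := by
      intro y₁ h1E h1d y₂ h2E h2d
      obtain ⟨hg1, hb1, hc1⟩ := hstruct y₁ h1E h1d
      obtain ⟨hg2, hb2, hc2⟩ := hstruct y₂ h2E h2d
      set x₁ := y₁ 0 with hx1
      set x₂ := y₂ 0 with hx2
      by_cases hxx : x₁ = x₂
      · ext i
        fin_cases i
        · exact hxx
        · show y₁ 1 = y₂ 1
          rw [hg1, hg2, hxx]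
      · exfalso
        set s₁ := f x₁ - b with hs1
        set s₂ := f x₂ - b with hs2
        have hs1sq : s₁^2 = d^2 - (x₁ - a)^2 := by rw [hs1]; rw [hg1] at hc1; linear_combination hc1
        have hs2sq : s₂^2 = d^2 - (x₂ - a)^2 := by rw [hs2]; rw [hg2] at hc2; linear_combination hc2
        have hs1nn : 0 ≤ s₁ := by rw [hs1]; rw [hg1] at hb1; linarith
        have hs2nn : 0 ≤ s₂ := by rw [hs2]; rw [hg2] at hb2; linarith
        set m := (x₁ + x₂)/2 with hm
        have hmlt : (m - a)^2 < d^2 := by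
          rw [hm]; exact mid_sq_lt d a x₁ x₂ s₁ s₂ hs1sq hs2sq hxx
        set β := Real.sqrt (d^2 - (m - a)^2) with hβ
        have hβsq : β^2 = d^2 - (m - a)^2 := Real.sq_sqrt (by linarith)
        have hβnn : 0 ≤ β := Real.sqrt_nonneg _
        have hβd : β ≤ d := by nlinarith [sq_nonneg (m - a)]
        have hfm : b + β ≤ f m := by
          by_contra h
          push_neg at h
          by_cases hmb : f m ≤ b
          · have hmem : pt m b ∈ E := by simpa [hE, pt_zero, pt_one] using hmb
            have := hlow _ hmem
            rw [pt_zero, pt_one] at this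
            nlinarith
          · push_neg at hmb
            have hmem : pt m (f m) ∈ E := by simp [hE, pt_zero, pt_one]
            have := hlow _ hmem
            rw [pt_zero, pt_one] at this
            nlinarith
        have hconvm : f m + C/2 * m^2 ≤ (f x₁ + C/2 * x₁^2)/2 + (f x₂ + C/2 * x₂^2)/2 := by
          have := hconv.2 (mem_univ x₁) (mem_univ x₂) (by norm_num : (0:ℝ) ≤ 1/2)
            (by norm_num : (0:ℝ) ≤ 1/2) (by norm_num)
          simp only [smul_eq_mul] at this
          have hmeq : (1/2 : ℝ) * x₁ + (1/2 : ℝ) * x₂ = m := by rw [hm]; ring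
          rw [hmeq] at this
          linarith
        have hf1 : f x₁ = b + s₁ := by rw [hs1]; ring
        have hf2 : f x₂ = b + s₂ := by rw [hs2]; ring
        have hchain : β + C/2 * ((x₁ + x₂)/2)^2 ≤ (s₁ + C/2 * x₁^2)/2 + (s₂ + C/2 * x₂^2)/2 := by
          rw [← hm]; linarith
        have hβsq' : β^2 = d^2 - ((x₁ + x₂)/2 - a)^2 := by rw [← hm]; exact hβsq
        exact circle_alg C d a x₁ x₂ s₁ s₂ β hC hdpos hCd hs1sq hs2sq hs1nn hs2nn hβsq' hβnn hchain hxx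
    rw [← hd] at hy₀d
    refine ⟨y₀, ⟨hy₀E, hy₀d.symm⟩, ?_⟩
    intro y hy
    exact huniq y hy.1 hy.2 y₀ hy₀E hy₀d.symm

/-- **Fu: the epigraph of a locally Lipschitz semiconvex function has positive reach.**
If `f : ℝ → ℝ` is locally Lipschitz and semiconvex (there is `C > 0` with
`x ↦ f x + (C/2) x²` convex), then its closed epigraph, viewed as a subset of the
Euclidean plane, has positive reach. -/
theorem epigraph_of_semiconvex_has_positive_reach
    (f : ℝ → ℝ) (hlip : LocallyLipschitz f)
    (hsemi : ∃ C > (0:ℝ), ConvexOn ℝ Set.univ (fun x => f x + C / 2 * x ^ 2)) :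
    0 < reach {v : EuclideanSpace ℝ (Fin 2) | f (v 0) ≤ v 1} := by
  obtain ⟨C, hC, hconv⟩ := hsemi
  set E := {v : EuclideanSpace ℝ (Fin 2) | f (v 0) ≤ v 1} with hE
  have hfc : Continuous f := hlip.continuous
  have hρpos : (0:ℝ≥0∞) < ENNReal.ofReal (1/C) := ENNReal.ofReal_pos.mpr (by positivity)
  refine lt_of_lt_of_le hρpos ?_
  refine le_iInf₂ fun y hy => ?_
  have hball : EMetric.ball y (ENNReal.ofReal (1/C)) ⊆ unp E := by
    intro w hw
    have hdist : dist w y < 1/C := by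
      replace hw : edist w y < ENNReal.ofReal (1/C) := hw
      rw [edist_dist] at hw
      exact (ENNReal.ofReal_lt_ofReal_iff (by positivity)).mp hw
    have hinf : infDist w E < 1/C := by
      have h1 : infDist w E ≤ dist w y := by
        rw [← infDist_closure]
        exact infDist_le_dist_of_mem hy
      linarith
    exact unique_nearest f hfc C hC hconv w hinf
  exact le_iSup₂ (f := fun (r : ℝ≥0∞) (_ : EMetric.ball y r ⊆ unp E) => r)
    (ENNReal.ofReal (1/C)) hball
end
end
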